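/- arXiv:2402.03644 — 6 statements merged into one kernel-verified Lean document; each statement's English description precedes it below -/
import Mathlib

section
/- Let d^{AS}_n be the number of derangements of {1,...,n} that are even permutations. Then for all n ≥ 2, d^{AS}_n = (n!/2)·Σ_{k=0}^{n-2} (-1)^k/k! + (-1)^{n-1}(n-1). -/
open Finset

/-- The number of even derangements of `{1,…,n}`: fixed-point-free permutations of sign `+1`. -/
def dAS (n : ℕ) : ℕ :=
  (Finset.univ.filter fun σ : Equiv.Perm (Fin n) =>
    (∀ i, σ i ≠ i) ∧ Equiv.Perm.sign σ = 1).card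

open Matrix in
lemma detJI (n : ℕ) (hn : 1 ≤ n) :
    (Matrix.of fun i j : Fin n => if i = j then (0:ℤ) else 1).det
      = (-1:ℤ)^(n-1) * ((n:ℤ) - 1) := by
  have hM : (Matrix.of fun i j : Fin n => if i = j then (0:ℤ) else 1)
      = -(1 + Matrix.replicateCol Unit (fun _ : Fin n => (-1:ℤ)) *
          Matrix.replicateRow Unit (fun _ : Fin n => (1:ℤ))) := by
    ext i j
    by_cases h : i = j <;>
      simp [h, Matrix.one_apply, Matrix.mul_apply, Matrix.add_apply]
  rw [hM, det_neg, det_one_add_replicateCol_mul_replicateRow]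
  obtain ⟨m, rfl⟩ := Nat.exists_eq_add_of_le hn
  simp only [dotProduct, Finset.sum_const, Finset.card_univ,
    Fintype.card_fin, nsmul_eq_mul, Nat.add_sub_cancel_left]
  push_cast
  ring

lemma signsum (n : ℕ) (hn : 1 ≤ n) :
    ∑ σ ∈ (Finset.univ.filter fun σ : Equiv.Perm (Fin n) => ∀ i, σ i ≠ i),
      ((Equiv.Perm.sign σ : ℤˣ) : ℤ) = (-1:ℤ)^(n-1) * ((n:ℤ) - 1) := by
  rw [← detJI n hn, Matrix.det_apply, Finset.sum_filter]
  apply Finset.sum_congr rfl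
  intro σ _
  rw [Units.smul_def, zsmul_eq_mul]
  simp only [Matrix.of_apply]
  by_cases h : ∀ i, σ i ≠ i
  · rw [if_pos h, Finset.prod_eq_one (fun i _ => by simp [h i]), mul_one]
    rfl
  · rw [if_neg h]
    push_neg at h
    obtain ⟨i, hi⟩ := h
    rw [Finset.prod_eq_zero (Finset.mem_univ i) (by simp [hi]), mul_zero]

lemma key (n : ℕ) (hn : 1 ≤ n) :
    (dAS n : ℤ) * 2 = (numDerangements n : ℤ) + (-1:ℤ)^(n-1) * ((n:ℤ) - 1) := by
  classical
  set S := (Finset.univ.filter fun σ : Equiv.Perm (Fin n) => ∀ i, σ i ≠ i) with hS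
  have hcard : S.card = numDerangements n := by
    rw [← card_derangements_fin_eq_numDerangements, hS, ← Fintype.card_subtype]
    exact Fintype.card_congr (Equiv.refl _)
  have hdcard : (S.filter fun σ => Equiv.Perm.sign σ = 1).card = dAS n := by
    simp [dAS, hS, Finset.filter_filter]
  have hle : dAS n ≤ S.card := by
    rw [← hdcard]; exact Finset.card_filter_le _ _
  have hsplit : (dAS n : ℤ) - ((S.card : ℤ) - dAS n) = (-1:ℤ)^(n-1) * ((n:ℤ) - 1) := by
    rw [← signsum n hn, ← Finset.sum_filter_add_sum_filter_not S
      (fun σ => Equiv.Perm.sign σ = 1)]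
    have h1 : ∑ σ ∈ S.filter (fun σ => Equiv.Perm.sign σ = 1),
        ((Equiv.Perm.sign σ : ℤˣ) : ℤ) = (dAS n : ℤ) := by
      rw [Finset.sum_congr rfl (fun σ hσ => by
        rw [(Finset.mem_filter.mp hσ).2, Units.val_one]),
        Finset.sum_const, nsmul_eq_mul, mul_one, hdcard]
    have hc : (S.filter (fun σ => ¬ Equiv.Perm.sign σ = 1)).card = S.card - dAS n := by
      have := Finset.card_filter_add_card_filter_not
        (s := S) (p := fun σ => Equiv.Perm.sign σ = 1)
      omega
    have h2 : ∑ σ ∈ S.filter (fun σ => ¬ Equiv.Perm.sign σ = 1),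
        ((Equiv.Perm.sign σ : ℤˣ) : ℤ) = -(((S.card : ℤ) - dAS n)) := by
      have hall : ∀ σ ∈ S.filter (fun σ => ¬ Equiv.Perm.sign σ = 1),
          ((Equiv.Perm.sign σ : ℤˣ) : ℤ) = -1 := by
        intro σ hσ
        rcases Int.units_eq_one_or (Equiv.Perm.sign σ) with h | h
        · exact absurd h (Finset.mem_filter.mp hσ).2
        · rw [h]; rfl
      rw [Finset.sum_congr rfl hall, Finset.sum_const, hc, nsmul_eq_mul]
      push_cast [Nat.cast_sub hle]
      ring
    rw [h1, h2]
    ring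
  rw [hcard] at hsplit
  linarith

theorem stmt8 (n : ℕ) (hn : 2 ≤ n) :
    (dAS n : ℚ) = ((n.factorial : ℚ) / 2) * (∑ k ∈ Finset.range (n - 1),
        (-1 : ℚ) ^ k / (k.factorial : ℚ)) + (-1 : ℚ) ^ (n - 1) * ((n : ℚ) - 1) := by
  have hkey := key n (le_trans one_le_two hn)
  have hD : (numDerangements n : ℚ)
      = ∑ k ∈ Finset.range (n+1), (-1:ℚ)^k * ((n.factorial : ℚ) / (k.factorial : ℚ)) := by
    have h := numDerangements_sum n
    have h2 : ((numDerangements n : ℤ) : ℚ) = _ := congrArg (fun z : ℤ => (z : ℚ)) h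
    rw [Int.cast_natCast] at h2
    rw [h2]
    push_cast
    apply Finset.sum_congr rfl
    intro k hk
    have hkn : k ≤ n := Nat.lt_succ_iff.mp (Finset.mem_range.mp hk)
    have hfac : (k.factorial : ℚ) * ((k+1).ascFactorial (n-k) : ℚ) = (n.factorial : ℚ) := by
      rw [← Nat.cast_mul, Nat.factorial_mul_ascFactorial, Nat.add_sub_cancel' hkn]
    have hk0 : (k.factorial : ℚ) ≠ 0 := Nat.cast_ne_zero.mpr k.factorial_ne_zero
    have : ((n.factorial : ℚ) / (k.factorial : ℚ)) = (((k+1).ascFactorial (n-k) : ℕ) : ℚ) := by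
      rw [← hfac, mul_comm, mul_div_assoc, div_self hk0, mul_one]
    rw [this]
  obtain ⟨m, rfl⟩ : ∃ m, n = m + 2 := ⟨n - 2, by omega⟩
  have hq : (dAS (m+2) : ℚ) * 2
      = (numDerangements (m+2) : ℚ) + (-1:ℚ)^(m+1) * (((m:ℚ) + 2) - 1) := by
    exact_mod_cast hkey
  rw [hD] at hq
  rw [show m + 2 + 1 = (m+1) + 1 + 1 from rfl, Finset.sum_range_succ, Finset.sum_range_succ] at hq
  have hm1 : ((m+1).factorial : ℚ) ≠ 0 := Nat.cast_ne_zero.mpr (m+1).factorial_ne_zero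
  have hm2 : ((m+2).factorial : ℚ) ≠ 0 := Nat.cast_ne_zero.mpr (m+2).factorial_ne_zero
  have hff : ((m+2).factorial : ℚ) = ((m:ℚ)+2) * ((m+1).factorial : ℚ) := by
    rw [show (m+2) = (m+1)+1 from rfl, Nat.factorial_succ]
    push_cast; ring
  have hsum : ∑ k ∈ Finset.range (m+1), (-1:ℚ)^k * (((m+2).factorial : ℚ) / (k.factorial : ℚ))
      = ((m+2).factorial : ℚ) * ∑ k ∈ Finset.range (m+1), (-1:ℚ)^k / (k.factorial : ℚ) := by
    rw [Finset.mul_sum]; apply Finset.sum_congr rfl; intro k _; ring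
  have e1 : ((m+2).factorial : ℚ) / ((m+1).factorial : ℚ) = (m:ℚ)+2 := by
    rw [hff, mul_div_assoc, div_self hm1, mul_one]
  have e2 : ((m+2).factorial : ℚ) / ((m+2).factorial : ℚ) = 1 := div_self hm2
  have hpow : (-1:ℚ)^(m+2) = -(-1:ℚ)^(m+1) := by rw [pow_succ]; ring
  rw [hsum, e1, e2, hpow] at hq
  simp only [show m + 2 - 1 = m + 1 from rfl]
  push_cast
  linear_combination hq / 2
end

section
/- Let d^{AS}_n be the number of even derangements of {1,...,n}. Then d^{AS}_1 = 0 and for all n ≥ 2, d^{AS}_n = n·d^{AS}_{n-1} + ((-1)^{n-1}/2)·(n-2)(n+1). -/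
open Finset

open Matrix Equiv in
/-- The sum of signs of derangements of `Fin n` equals `det (J - I) = (-1)^n (1 - n)`. -/
lemma dAS_signsum (n : ℕ) :
    ∑ σ ∈ univ.filter (fun σ : Equiv.Perm (Fin n) => ∀ i, σ i ≠ i),
      ((Equiv.Perm.sign σ : ℤ)) = (-1)^n * (1 - n) := by
  have hd : (Matrix.of fun i j : Fin n => if i = j then (0:ℤ) else 1).det
      = ∑ σ ∈ univ.filter (fun σ : Equiv.Perm (Fin n) => ∀ i, σ i ≠ i),
        ((Equiv.Perm.sign σ : ℤ)) := by
    rw [Matrix.det_apply, Finset.sum_filter]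
    refine Finset.sum_congr rfl fun σ _ => ?_
    by_cases h : ∀ i, σ i ≠ i
    · rw [if_pos h]
      have h1 : ∏ i, (Matrix.of fun i j : Fin n => if i = j then (0:ℤ) else 1) (σ i) i = 1 := by
        apply Finset.prod_eq_one; intro i _; simp [h i]
      rw [h1]; simp [Units.smul_def]
    · push_neg at h
      obtain ⟨i, hi⟩ := h
      rw [if_neg (by push_neg; exact ⟨i, hi⟩),
        Finset.prod_eq_zero (Finset.mem_univ i) (by simp [hi]), smul_zero]
  rw [← hd]
  have h : (Matrix.of fun i j : Fin n => if i = j then (0:ℤ) else 1)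
      = (-1 : ℤ) • (1 + replicateCol (Fin 1) (fun _ => (-1:ℤ)) * replicateRow (Fin 1) (fun _ => (1:ℤ))) := by
    ext i j
    simp [Matrix.one_apply, Matrix.mul_apply, Matrix.replicateCol, Matrix.replicateRow]
    split <;> simp
  erw [h, Matrix.det_smul, Matrix.det_one_add_replicateCol_mul_replicateRow]
  simp [dotProduct]
  ring

open Equiv in
/-- Twice the number of even derangements is the derangement number plus the sign sum. -/
lemma dAS_key (n : ℕ) : (2 * dAS n : ℤ) = numDerangements n + (-1)^n * (1 - n) := by
  classical
  set D := univ.filter (fun σ : Equiv.Perm (Fin n) => ∀ i, σ i ≠ i) with hD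
  have hcard : D.card = numDerangements n := by
    rw [← card_derangements_fin_eq_numDerangements, hD]
    exact (Fintype.card_of_subtype _ (by simp [derangements])).symm
  have hfilter : dAS n = (D.filter (fun σ => Equiv.Perm.sign σ = 1)).card := by
    rw [dAS, hD, filter_filter]
  have hsplit := Finset.sum_filter_add_sum_filter_not D (fun σ => Equiv.Perm.sign σ = 1)
    (fun σ => ((Equiv.Perm.sign σ : ℤ)))
  have h1 : ∑ σ ∈ D.filter (fun σ => Equiv.Perm.sign σ = 1), ((Equiv.Perm.sign σ : ℤ))
      = (D.filter (fun σ => Equiv.Perm.sign σ = 1)).card := by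
    rw [Finset.sum_eq_card_nsmul (b := (1:ℤ))
      (fun σ hσ => by rw [(Finset.mem_filter.mp hσ).2]; rfl)]
    simp
  have h2 : ∑ σ ∈ D.filter (fun σ => ¬ Equiv.Perm.sign σ = 1), ((Equiv.Perm.sign σ : ℤ))
      = -(D.filter (fun σ => ¬ Equiv.Perm.sign σ = 1)).card := by
    rw [Finset.sum_eq_card_nsmul (b := (-1:ℤ)) (fun σ hσ => by
      rcases Int.units_eq_one_or (Equiv.Perm.sign σ) with h | h
      · exact absurd h (Finset.mem_filter.mp hσ).2
      · rw [h]; rfl)]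
    simp
  have hcards := Finset.card_filter_add_card_filter_not
    (s := D) (p := fun σ => Equiv.Perm.sign σ = 1)
  have hs : ∑ σ ∈ D, ((Equiv.Perm.sign σ : ℤ)) = (-1)^n * (1 - n) := dAS_signsum n
  have e1 : ((D.filter (fun σ => Equiv.Perm.sign σ = 1)).card : ℤ)
      - (D.filter (fun σ => ¬ Equiv.Perm.sign σ = 1)).card = (-1)^n * (1 - n) := by
    rw [← hs, ← hsplit, h1, h2]; ring
  have e2 : ((D.filter (fun σ => Equiv.Perm.sign σ = 1)).card : ℤ)
      + (D.filter (fun σ => ¬ Equiv.Perm.sign σ = 1)).card = numDerangements n := by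
    exact_mod_cast congrArg (Nat.cast (R := ℤ)) (hcards.trans hcard)
  rw [hfilter]
  linarith

theorem stmt9 :
    dAS 1 = 0 ∧
    ∀ n : ℕ, 2 ≤ n →
      (dAS n : ℚ) = (n : ℚ) * (dAS (n - 1) : ℚ) +
        ((-1 : ℚ) ^ (n - 1) / 2) * ((n : ℚ) - 2) * ((n : ℚ) + 1) := by
  constructor
  · have := dAS_key 1
    simp at this
    omega
  · intro n hn
    obtain ⟨m, rfl⟩ : ∃ m, n = m + 2 := ⟨n - 2, by omega⟩
    have k2 := congrArg (fun z : ℤ => (z : ℚ)) (dAS_key (m + 2))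
    have k1 := congrArg (fun z : ℤ => (z : ℚ)) (dAS_key (m + 1))
    have hrec := congrArg (fun z : ℤ => (z : ℚ)) (numDerangements_succ (m + 1))
    push_cast at k2 k1 hrec
    have hn1 : m + 2 - 1 = m + 1 := by omega
    rw [hn1]
    push_cast
    linear_combination (1/2 : ℚ) * k2 - ((m + 2 : ℚ)/2) * k1 + (1/2 : ℚ) * hrec
end

section
/- Let d^{AB}_n be the number of signed derangements σ in the hyperoctahedral group B_n (signed permutations of {1,...,n} with σ(i) ≠ i for all i) whose type-B Coxeter length ℓ_B(σ) is even. Then for all n ≥ 1, d^{AB}_n = n!·Σ_{k=0}^{n-1} 2^{n-k-1}(-1)^k/k! + (-1)^n. -/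
open Finset

/-- `w : Fin n → ℤ` is a signed permutation of `{1,…,n}`: the absolute values of its
entries form a permutation of `{1,…,n}`. -/
def isSignedPerm (n : ℕ) (w : Fin n → ℤ) : Prop :=
  (∀ i, 1 ≤ (w i).natAbs ∧ (w i).natAbs ≤ n) ∧
    Function.Injective fun i => (w i).natAbs

/-- The inversion number of the word `w`, with respect to the usual order on `ℤ`. -/
def invW (n : ℕ) (w : Fin n → ℤ) : ℕ :=
  ((Finset.univ : Finset (Fin n × Fin n)).filter fun p => p.1 < p.2 ∧ w p.2 < w p.1).card

/-- The type-`B` length: `ℓ_B(w) = inv(w) - ∑_{i : w_i < 0} w_i`. -/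
def lenB (n : ℕ) (w : Fin n → ℤ) : ℤ :=
  (invW n w : ℤ) - ∑ i ∈ Finset.univ.filter (fun i : Fin n => w i < 0), w i

/-- `w` is a signed derangement: no entry satisfies `w_i = i` (in 1-indexed notation). -/
def isDerang (n : ℕ) (w : Fin n → ℤ) : Prop :=
  ∀ i : Fin n, w i ≠ ((i : ℕ) : ℤ) + 1

/-- The number of signed derangements in the hyperoctahedral group `B_n` whose
type-`B` length is even. -/
noncomputable def dAB (n : ℕ) : ℕ :=
  Set.ncard {w : Fin n → ℤ |
    isSignedPerm n w ∧ isDerang n w ∧ Even (lenB n w)}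

namespace SPaux
variable {n : ℕ}

def wOf (n : ℕ) (π : Equiv.Perm (Fin n)) (ε : Fin n → Bool) : Fin n → ℤ :=
  fun i => if ε i then -(((π i : ℕ) : ℤ) + 1) else ((π i : ℕ) : ℤ) + 1

def negSum (n : ℕ) (w : Fin n → ℤ) : ℕ :=
  ∑ i ∈ Finset.univ.filter (fun i : Fin n => w i < 0), (w i).natAbs

def negc (n : ℕ) (ε : Fin n → Bool) : ℕ :=
  (Finset.univ.filter (fun i : Fin n => ε i = true)).card

def invP (n : ℕ) (π : Equiv.Perm (Fin n)) : ℕ :=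
  invW n (wOf n π (fun _ => false))

lemma wOf_natAbs (π : Equiv.Perm (Fin n)) (ε : Fin n → Bool) (i : Fin n) :
    ((wOf n π ε i).natAbs) = (π i : ℕ) + 1 := by
  unfold wOf; split <;> omega

lemma isSignedPerm_wOf (π : Equiv.Perm (Fin n)) (ε : Fin n → Bool) :
    isSignedPerm n (wOf n π ε) := by
  constructor
  · intro i
    rw [wOf_natAbs]
    have := (π i).isLt
    omega
  · intro i j h
    simp only [wOf_natAbs] at h
    have : π i = π j := Fin.ext (by omega)
    exact π.injective this

lemma isDerang_wOf (π : Equiv.Perm (Fin n)) (ε : Fin n → Bool) :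
    isDerang n (wOf n π ε) ↔ ∀ i, π i = i → ε i = true := by
  unfold isDerang wOf
  constructor
  · intro h i hpi
    by_contra hne
    have := h i
    simp [hne, hpi] at this
  · intro h i
    by_cases hε : ε i = true
    · simp only [hε, if_true]
      have : (0:ℤ) < ((π i : ℕ) : ℤ) + 1 := by positivity
      intro hc
      omega
    · rw [if_neg hε]
      intro hc
      have hpi : π i = i := Fin.ext (by omega)
      exact hε (h i hpi)

lemma lenB_eq (w : Fin n → ℤ) : lenB n w = ((invW n w + negSum n w : ℕ) : ℤ) := by
  unfold lenB negSum
  push_cast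
  rw [sub_eq_add_neg, ← Finset.sum_neg_distrib]
  refine congrArg _ (Finset.sum_congr rfl fun i hi => ?_)
  simp only [Finset.mem_filter] at hi
  rw [abs_of_neg hi.2]

lemma prod_ite_neg_one {α : Type*} (s : Finset α) (q : α → Prop) [DecidablePred q] :
    (∏ a ∈ s, (if q a then (-1:ℚ) else 1)) = (-1:ℚ)^(s.filter q).card := by
  rw [Finset.prod_ite, Finset.prod_const, Finset.prod_const_one, mul_one]

lemma neg_one_pow_invW (w : Fin n → ℤ) :
    ((-1:ℚ))^(invW n w) = ∏ p ∈ (univ : Finset (Fin n × Fin n)).filter (fun p => p.1 < p.2),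
      (if w p.2 < w p.1 then (-1:ℚ) else 1) := by
  rw [prod_ite_neg_one, Finset.filter_filter]
  rfl

lemma card_lt_filter (w' : Fin n → ℤ) (hsp : isSignedPerm n w') (m : ℕ)
    (hmn : m ≤ n) :
    (univ.filter (fun k : Fin n => (w' k).natAbs < m)).card = m - 1 := by
  set f : Fin n → ℕ := fun i => (w' i).natAbs with hf
  have hinj : Function.Injective f := hsp.2
  have himg : Finset.image f univ = Finset.Icc 1 n := by
    apply Finset.eq_of_subset_of_card_le
    · intro x hx
      simp only [Finset.mem_image] at hx
      obtain ⟨i, _, rfl⟩ := hx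
      simp only [Finset.mem_Icc]
      exact (hsp.1 i)
    · rw [Finset.card_image_of_injective _ hinj, Nat.card_Icc]
      simp
  have hcond : univ.filter (fun k : Fin n => (w' k).natAbs < m)
      = univ.filter (fun k => f k ∈ Finset.Icc 1 (m-1)) := by
    apply Finset.filter_congr
    intro k _
    have := hsp.1 k
    simp only [Finset.mem_Icc, hf]
    omega
  have hsub : Finset.Icc 1 (m-1) ⊆ Finset.Icc 1 n := by
    apply Finset.Icc_subset_Icc le_rfl; omega
  have himg2 : Finset.image f (univ.filter (fun k => f k ∈ Finset.Icc 1 (m-1)))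
      = Finset.Icc 1 (m-1) := by
    ext x
    simp only [Finset.mem_image, Finset.mem_filter, Finset.mem_univ, true_and]
    constructor
    · rintro ⟨i, hi, rfl⟩; exact hi
    · intro hx
      have hx2 : x ∈ Finset.Icc 1 n := hsub hx
      rw [← himg] at hx2
      obtain ⟨i, _, rfl⟩ := Finset.mem_image.mp hx2
      exact ⟨i, hx, rfl⟩
  rw [hcond, ← Finset.card_image_of_injective _ hinj, himg2, Nat.card_Icc]
  omega

lemma flip_invW (w w' : Fin n → ℤ) (hsp : isSignedPerm n w') (j : Fin n) (m : ℕ)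
    (hm : w' j = (m:ℤ)) (hmpos : 0 < m)
    (hoth : ∀ i, i ≠ j → w i = w' i) (hj : w j = -(m:ℤ)) :
    ((-1:ℚ))^(invW n w) = ((-1:ℚ))^(invW n w') * (-1)^(m-1) := by
  have hmn : m ≤ n := by have h := (hsp.1 j).2; rw [hm] at h; simpa using h
  set P := (univ : Finset (Fin n × Fin n)).filter (fun p => p.1 < p.2) with hP
  set D := P.filter (fun p => ¬((w p.2 < w p.1) ↔ (w' p.2 < w' p.1))) with hD
  have habs : ∀ k : Fin n, k ≠ j → (w' k).natAbs ≠ m := by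
    intro k hk hc
    apply hk
    apply hsp.2
    show (w' k).natAbs = (w' j).natAbs
    rw [hm, hc]; simp
  have key : ((-1:ℚ))^(invW n w) * ((-1:ℚ))^(invW n w') = (-1:ℚ) ^ D.card := by
    rw [neg_one_pow_invW, neg_one_pow_invW, ← Finset.prod_mul_distrib, hD,
      ← prod_ite_neg_one]
    refine Finset.prod_congr rfl fun p _ => ?_
    by_cases h1 : w p.2 < w p.1 <;> by_cases h2 : w' p.2 < w' p.1 <;>
      simp [h1, h2]
  -- compute D.card = m - 1 via bijection with K
  have hcard : D.card = m - 1 := by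
    rw [← card_lt_filter w' hsp m hmn]
    apply Finset.card_bij' (fun p _ => if (p.1 : Fin n) = j then p.2 else p.1)
      (fun (k : Fin n) _ => if (k : ℕ) < (j : ℕ) then ((k, j) : Fin n × Fin n) else (j, k))
    · -- maps D into K
      intro p hp
      simp only [hD, hP, Finset.mem_filter, Finset.mem_univ, true_and] at hp
      obtain ⟨hlt, hdif⟩ := hp
      simp only [Finset.mem_filter, Finset.mem_univ, true_and]
      by_cases h1 : p.1 = j
      · rw [if_pos h1]
        have hk : p.2 ≠ j := by
          intro hc; rw [h1, hc] at hlt; exact lt_irrefl _ hlt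
        have hw2 : w p.2 = w' p.2 := hoth _ hk
        rw [h1, hw2, hj, hm] at hdif
        have := habs _ hk
        omega
      · rw [if_neg h1]
        have h2 : p.2 = j := by
          by_contra h2
          rw [hoth _ h1, hoth _ h2] at hdif
          exact hdif Iff.rfl
        rw [h2, hoth _ h1, hj, hm] at hdif
        have := habs _ h1
        omega
    · -- maps K into D
      intro k hk
      simp only [Finset.mem_filter, Finset.mem_univ, true_and] at hk
      have hkj : k ≠ j := by
        intro hc; rw [hc, hm] at hk; simp at hk
      have hwk : w k = w' k := hoth _ hkj
      simp only [hD, hP, Finset.mem_filter, Finset.mem_univ, true_and]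
      by_cases hlt : (k : ℕ) < (j : ℕ)
      · rw [if_pos hlt]
        refine ⟨hlt, ?_⟩
        simp only
        rw [hj, hm, hwk]
        omega
      · rw [if_neg hlt]
        have hjk : (j : ℕ) < (k : ℕ) := by
          have : (k:ℕ) ≠ (j:ℕ) := fun hc => hkj (Fin.ext hc)
          omega
        refine ⟨hjk, ?_⟩
        simp only
        rw [hj, hm, hwk]
        omega
    · -- left inverse
      intro p hp
      simp only [hD, hP, Finset.mem_filter, Finset.mem_univ, true_and] at hp
      obtain ⟨hlt, hdif⟩ := hp
      have hltn : (p.1 : ℕ) < (p.2 : ℕ) := hlt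
      by_cases h1 : p.1 = j
      · rw [if_pos h1]
        have hnl : ¬ ((p.2 : ℕ) < (j : ℕ)) := by rw [← h1]; omega
        rw [if_neg hnl, ← h1]
      · rw [if_neg h1]
        have h2 : p.2 = j := by
          by_contra h2
          rw [hoth _ h1, hoth _ h2] at hdif
          exact hdif Iff.rfl
        have hyl : (p.1 : ℕ) < (j : ℕ) := by rw [← h2]; omega
        rw [if_pos hyl, ← h2]
    · -- right inverse
      intro k hk
      simp only [Finset.mem_filter, Finset.mem_univ, true_and] at hk
      have hkj : k ≠ j := by
        intro hc; rw [hc, hm] at hk; simp at hk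
      by_cases hlt : (k : ℕ) < (j : ℕ)
      · rw [if_pos hlt]
        simp [hkj]
      · rw [if_neg hlt]
        simp
  rw [hcard] at key
  have h2 : ((-1:ℚ))^(invW n w') * ((-1:ℚ))^(invW n w') = 1 := by
    rw [← pow_add]
    exact Even.neg_one_pow ⟨invW n w', rfl⟩
  calc ((-1:ℚ))^(invW n w)
      = ((-1:ℚ))^(invW n w) * (((-1:ℚ))^(invW n w') * ((-1:ℚ))^(invW n w')) := by
        rw [h2, mul_one]
    _ = ((-1:ℚ))^(invW n w') * ((-1:ℚ)^(invW n w) * (-1:ℚ)^(invW n w')) := by ring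
    _ = ((-1:ℚ))^(invW n w') * (-1)^(m-1) := by rw [key]

lemma negfilter (π : Equiv.Perm (Fin n)) (ε : Fin n → Bool) :
    univ.filter (fun i => wOf n π ε i < 0) = univ.filter (fun i => ε i = true) := by
  apply Finset.filter_congr
  intro i _
  unfold wOf
  by_cases h : ε i = true <;> simp [h] <;> omega

lemma negSum_wOf (π : Equiv.Perm (Fin n)) (ε : Fin n → Bool) :
    negSum n (wOf n π ε) = ∑ i ∈ univ.filter (fun i => ε i = true), ((π i : ℕ) + 1) := by
  unfold negSum
  rw [negfilter]
  exact Finset.sum_congr rfl fun i _ => wOf_natAbs π ε i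

lemma parity_wOf (π : Equiv.Perm (Fin n)) (ε : Fin n → Bool) :
    (-1:ℚ)^(invW n (wOf n π ε)) * (-1:ℚ)^(negSum n (wOf n π ε))
      = (-1:ℚ)^(invP n π) * (-1:ℚ)^(negc n ε) := by
  suffices h : ∀ k (ε : Fin n → Bool), negc n ε = k →
      (-1:ℚ)^(invW n (wOf n π ε)) * (-1:ℚ)^(negSum n (wOf n π ε))
        = (-1:ℚ)^(invP n π) * (-1:ℚ)^(negc n ε) from h _ ε rfl
  intro k
  induction k with
  | zero =>
    intro ε hε
    have hfalse : ε = fun _ => false := by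
      funext i
      by_contra hc
      have hi : i ∈ univ.filter (fun i : Fin n => ε i = true) := by
        simp only [Finset.mem_filter, Finset.mem_univ, true_and]
        revert hc; cases ε i <;> simp
      unfold negc at hε
      rw [Finset.card_eq_zero] at hε
      rw [hε] at hi
      exact absurd hi (Finset.notMem_empty i)
    subst hfalse
    have hns : negSum n (wOf n π (fun _ => false)) = 0 := by
      rw [negSum_wOf]
      simp
    rw [hns, hε]
    unfold invP
    norm_num
  | succ k ih =>
    intro ε hε
    have hex : ∃ j, ε j = true := by
      by_contra hc
      push_neg at hc
      have : univ.filter (fun i : Fin n => ε i = true) = ∅ := by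
        apply Finset.filter_false_of_mem
        intro i _
        exact hc i
      unfold negc at hε
      rw [this] at hε
      simp at hε
    obtain ⟨j, hjt⟩ := hex
    have hjmem : j ∈ univ.filter (fun i : Fin n => ε i = true) := by
      simp [hjt]
    set ε' : Fin n → Bool := Function.update ε j false with hε'
    have hfe : univ.filter (fun i => ε' i = true)
        = (univ.filter (fun i : Fin n => ε i = true)).erase j := by
      ext i
      simp only [Finset.mem_erase, Finset.mem_filter, Finset.mem_univ, true_and]
      by_cases h : i = j
      · subst h; simp [hε', Function.update_self]
      · simp [hε', Function.update_of_ne h, h]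
    have hnc' : negc n ε' = k := by
      unfold negc
      rw [hfe, Finset.card_erase_of_mem hjmem]
      unfold negc at hε
      omega
    have hnc : negc n ε = k + 1 := hε
    set m : ℕ := (π j : ℕ) + 1 with hmdef
    have hw_oth : ∀ i, i ≠ j → wOf n π ε i = wOf n π ε' i := by
      intro i hi
      unfold wOf
      rw [hε', Function.update_of_ne hi]
    have hm : wOf n π ε' j = (m : ℤ) := by
      unfold wOf
      rw [hε', Function.update_self]
      simp [hmdef]
    have hjw : wOf n π ε j = -(m : ℤ) := by
      unfold wOf
      rw [hjt]
      simp [hmdef]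
    have hflip := flip_invW (wOf n π ε) (wOf n π ε') (isSignedPerm_wOf π ε') j m hm
      (Nat.succ_pos _) hw_oth hjw
    have hns : negSum n (wOf n π ε) = negSum n (wOf n π ε') + m := by
      rw [negSum_wOf, negSum_wOf, hfe]
      rw [← Finset.add_sum_erase _ _ hjmem]
      ring
    have hm1 : m - 1 = (π j : ℕ) := by omega
    have hih := ih ε' hnc'
    rw [hflip, hns, hnc, hm1, pow_add]
    rw [hnc'] at hih
    calc ((-1:ℚ))^(invW n (wOf n π ε')) * (-1)^((π j : ℕ)) *
          ((-1:ℚ)^(negSum n (wOf n π ε')) * (-1)^m)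
        = ((-1:ℚ))^(invW n (wOf n π ε')) * (-1:ℚ)^(negSum n (wOf n π ε')) *
          ((-1)^((π j : ℕ)) * (-1)^m) := by ring
      _ = ((-1:ℚ))^(invP n π) * (-1:ℚ)^k * ((-1)^((π j : ℕ)) * (-1)^m) := by rw [hih]
      _ = ((-1:ℚ))^(invP n π) * ((-1:ℚ)^k * (-1:ℚ)^1) *
            ((-1)^((π j : ℕ)) * (-1)^((π j : ℕ))) := by
          rw [hmdef, pow_add]; ring
      _ = ((-1:ℚ))^(invP n π) * ((-1:ℚ)^k * (-1:ℚ)^1) := by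
          have hone : ((-1:ℚ))^((π j:ℕ)) * (-1:ℚ)^((π j:ℕ)) = 1 := by
            rw [← pow_add]; exact Even.neg_one_pow ⟨_, rfl⟩
          rw [hone, mul_one]
      _ = ((-1:ℚ))^(invP n π) * (-1:ℚ)^(k+1) := by rw [pow_add]

lemma even_lenB_iff (π : Equiv.Perm (Fin n)) (ε : Fin n → Bool) :
    Even (lenB n (wOf n π ε)) ↔ Even (invP n π + negc n ε) := by
  rw [lenB_eq, Int.even_coe_nat]
  have h := parity_wOf π ε
  rw [← pow_add, ← pow_add] at h
  constructor
  · intro he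
    rw [Even.neg_one_pow he] at h
    by_contra ho
    rw [Odd.neg_one_pow (Nat.not_even_iff_odd.mp ho)] at h
    norm_num at h
  · intro he
    rw [Even.neg_one_pow he] at h
    by_contra ho
    rw [Odd.neg_one_pow (Nat.not_even_iff_odd.mp ho)] at h
    norm_num at h

lemma wOf_injective : Function.Injective
    (fun x : Equiv.Perm (Fin n) × (Fin n → Bool) => wOf n x.1 x.2) := by
  rintro ⟨π, ε⟩ ⟨π', ε'⟩ h
  simp only at h
  have key : ∀ i, π i = π' i ∧ ε i = ε' i := by
    intro i
    have hi := congrFun h i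
    unfold wOf at hi
    rcases hb : ε i <;> rcases hb' : ε' i <;> rw [hb, hb'] at hi <;> simp at hi
    · exact ⟨Fin.ext (by omega), rfl⟩
    · omega
    · omega
    · exact ⟨Fin.ext (by omega), rfl⟩
  have h1 : π = π' := Equiv.ext fun i => (key i).1
  have h2 : ε = ε' := funext fun i => (key i).2
  rw [h1, h2]

open scoped Classical in
noncomputable def pairSet (n : ℕ) : Finset (Equiv.Perm (Fin n) × (Fin n → Bool)) :=
  Finset.univ.filter (fun x => (∀ i, x.1 i = i → x.2 i = true) ∧ Even (invP n x.1 + negc n x.2))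

lemma set_eq :
    {w : Fin n → ℤ | isSignedPerm n w ∧ isDerang n w ∧ Even (lenB n w)}
      = (fun x : Equiv.Perm (Fin n) × (Fin n → Bool) => wOf n x.1 x.2) '' ↑(pairSet n) := by
  ext w
  simp only [Set.mem_setOf_eq, Set.mem_image, Finset.coe_filter, pairSet,
    Finset.mem_filter, Finset.mem_univ, true_and, Set.mem_setOf_eq]
  constructor
  · rintro ⟨hsp, hd, he⟩
    have hb : ∀ i, 1 ≤ (w i).natAbs ∧ (w i).natAbs ≤ n := hsp.1
    set f : Fin n → Fin n := fun i => ⟨(w i).natAbs - 1, by have := hb i; omega⟩ with hf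
    have hfinj : Function.Injective f := by
      intro i j hij
      apply hsp.2
      have h1 := hb i
      have h2 := hb j
      have hval : (w i).natAbs - 1 = (w j).natAbs - 1 := congrArg Fin.val hij
      show (w i).natAbs = (w j).natAbs
      omega
    set π : Equiv.Perm (Fin n) := Equiv.ofBijective f
      ((Finite.injective_iff_bijective).mp hfinj) with hπ
    set ε : Fin n → Bool := fun i => decide (w i < 0) with hε
    have hw : wOf n π ε = w := by
      funext i
      unfold wOf
      have hπi : (π i : ℕ) = (w i).natAbs - 1 := by
        simp [hπ, Equiv.ofBijective_apply, hf]
      have hbi := hb i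
      by_cases hneg : w i < 0
      · have hd2 : ε i = true := by rw [hε]; exact decide_eq_true hneg
        simp only [hd2, if_true, hπi]
        omega
      · have hd2 : ε i = false := by rw [hε]; exact decide_eq_false hneg
        simp only [hd2, Bool.false_eq_true, if_false, hπi]
        omega
    refine ⟨(π, ε), ⟨?_, ?_⟩, hw⟩
    · intro i hpi
      rw [← hw] at hd
      exact (isDerang_wOf π ε).mp hd i hpi
    · rw [← hw] at he
      exact (even_lenB_iff π ε).mp he
  · rintro ⟨⟨π, ε⟩, ⟨hg, he⟩, rfl⟩
    exact ⟨isSignedPerm_wOf π ε, (isDerang_wOf π ε).mpr hg, (even_lenB_iff π ε).mpr he⟩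

lemma dAB_eq_card : dAB n = (pairSet n).card := by
  unfold dAB
  rw [set_eq, Set.ncard_image_of_injective _ wOf_injective, Set.ncard_coe_finset]


lemma negc_def (n : ℕ) (ε : Fin n → Bool) :
  negc n ε = (Finset.univ.filter (fun i : Fin n => ε i = true)).card := rfl

lemma invP_one (n : ℕ) : invP n 1 = 0 := by
  unfold invP invW
  rw [Finset.card_eq_zero]
  apply Finset.filter_false_of_mem
  intro p _
  rintro ⟨h1, h2⟩
  have hlt : (p.1 : ℕ) < (p.2 : ℕ) := h1
  unfold wOf at h2
  simp only [if_neg (by simp : ¬ (false = true))] at h2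
  have : ((1 : Equiv.Perm (Fin n)) p.1 : ℕ) = (p.1 : ℕ) := rfl
  have h3 : ((1 : Equiv.Perm (Fin n)) p.2 : ℕ) = (p.2 : ℕ) := rfl
  rw [this, h3] at h2
  omega
lemma card_compl_subtype (t : Finset (Fin n)) :
    Fintype.card {a : Fin n // a ∉ t} = n - t.card := by
  have h := Fintype.card_subtype_compl (fun a : Fin n => a ∈ t)
  simp only [Fintype.card_fin] at h
  rw [h]
  congr 1
  exact Fintype.card_coe t

lemma count_fix (t : Finset (Fin n)) :
    (univ.filter (fun π : Equiv.Perm (Fin n) => ∀ i ∈ t, π i = i)).card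
      = (n - t.card).factorial := by
  rw [← Fintype.card_subtype]
  have e1 : {π : Equiv.Perm (Fin n) // ∀ i ∈ t, π i = i}
      ≃ {f : Equiv.Perm (Fin n) // ∀ a, ¬ (a ∉ t) → f a = a} :=
    Equiv.subtypeEquivRight (by
      intro π
      constructor
      · intro h a ha; exact h a (not_not.mp ha)
      · intro h i hi; exact h i (not_not_intro hi))
  have e2 := Equiv.Perm.subtypeEquivSubtypePerm (fun a : Fin n => a ∉ t)
  rw [Fintype.card_congr (e1.trans e2.symm), Fintype.card_perm, card_compl_subtype]

lemma count_eps (t : Finset (Fin n)) :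
    (univ.filter (fun ε : Fin n → Bool => ∀ i ∈ t, ε i = false)).card
      = 2^(n - t.card) := by
  rw [← Fintype.card_subtype]
  have e : {ε : Fin n → Bool // ∀ i ∈ t, ε i = false} ≃ ({a : Fin n // a ∉ t} → Bool) :=
  { toFun := fun ε a => ε.1 a.1
    invFun := fun g => ⟨fun i => if h : i ∈ t then false else g ⟨i, h⟩,
      fun i hi => by simp [hi]⟩
    left_inv := by
      rintro ⟨ε, hε⟩
      apply Subtype.ext
      funext i
      by_cases h : i ∈ t
      · simp [h, hε i h]
      · simp [h]
    right_inv := by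
      intro g
      funext a
      simp [a.2] }
  rw [Fintype.card_congr e, Fintype.card_fun, card_compl_subtype, Fintype.card_bool]

lemma N_eq (t : Finset (Fin n)) :
    ∑ x : Equiv.Perm (Fin n) × (Fin n → Bool),
        (∏ i ∈ t, (if x.1 i = i ∧ x.2 i = false then (1:ℚ) else 0))
      = ((n - t.card).factorial : ℚ) * 2^(n - t.card) := by
  have hpt : ∀ x : Equiv.Perm (Fin n) × (Fin n → Bool),
      (∏ i ∈ t, (if x.1 i = i ∧ x.2 i = false then (1:ℚ) else 0))
        = if ((∀ i ∈ t, x.1 i = i) ∧ (∀ i ∈ t, x.2 i = false)) then 1 else 0 := by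
    intro x
    by_cases h : (∀ i ∈ t, x.1 i = i) ∧ (∀ i ∈ t, x.2 i = false)
    · rw [if_pos h]
      apply Finset.prod_eq_one
      intro i hi
      rw [if_pos ⟨h.1 i hi, h.2 i hi⟩]
    · rw [if_neg h]
      have hex : ∃ i ∈ t, ¬(x.1 i = i ∧ x.2 i = false) := by
        by_contra hc
        push_neg at hc
        exact h ⟨fun i hi => (hc i hi).1, fun i hi => (hc i hi).2⟩
      obtain ⟨i, hi, hni⟩ := hex
      exact Finset.prod_eq_zero hi (if_neg hni)
  simp_rw [hpt]
  rw [Finset.sum_boole]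
  have hfp : (univ.filter (fun x : Equiv.Perm (Fin n) × (Fin n → Bool) =>
      (∀ i ∈ t, x.1 i = i) ∧ (∀ i ∈ t, x.2 i = false)))
      = (univ.filter (fun π : Equiv.Perm (Fin n) => ∀ i ∈ t, π i = i)) ×ˢ
        (univ.filter (fun ε : Fin n → Bool => ∀ i ∈ t, ε i = false)) := by
    ext x
    simp [Finset.mem_product]
  rw [hfp, Finset.card_product, count_fix, count_eps]
  push_cast
  ring

lemma T_eq :
    ∑ x : Equiv.Perm (Fin n) × (Fin n → Bool),
        (if (∀ i, x.1 i = i → x.2 i = true) then (1:ℚ) else 0)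
      = ∑ j ∈ Finset.range (n+1),
          (n.choose j : ℚ) * ((-1)^j * (((n-j).factorial : ℚ) * 2^(n-j))) := by
  have hpt : ∀ x : Equiv.Perm (Fin n) × (Fin n → Bool),
      (if (∀ i, x.1 i = i → x.2 i = true) then (1:ℚ) else 0)
        = ∏ i : Fin n, ((1:ℚ) - (if x.1 i = i ∧ x.2 i = false then 1 else 0)) := by
    intro x
    by_cases h : ∀ i, x.1 i = i → x.2 i = true
    · rw [if_pos h]
      symm
      apply Finset.prod_eq_one
      intro i _
      have hni : ¬ (x.1 i = i ∧ x.2 i = false) := by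
        rintro ⟨h1, h2⟩
        have := h i h1
        rw [this] at h2
        exact absurd h2 (by simp)
      rw [if_neg hni]
      ring
    · rw [if_neg h]
      push_neg at h
      obtain ⟨i, hi1, hi2⟩ := h
      symm
      apply Finset.prod_eq_zero (Finset.mem_univ i)
      have hyes : x.1 i = i ∧ x.2 i = false := ⟨hi1, by revert hi2; cases x.2 i <;> simp⟩
      rw [if_pos hyes]
      ring
  simp_rw [hpt]
  have hexp : ∀ x : Equiv.Perm (Fin n) × (Fin n → Bool),
      ∏ i : Fin n, ((1:ℚ) - (if x.1 i = i ∧ x.2 i = false then 1 else 0))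
        = ∑ t ∈ (univ : Finset (Fin n)).powerset,
            (-1:ℚ)^t.card * ∏ i ∈ t, (if x.1 i = i ∧ x.2 i = false then (1:ℚ) else 0) := by
    intro x
    have h1 : ∀ i : Fin n, (1:ℚ) - (if x.1 i = i ∧ x.2 i = false then 1 else 0)
        = (-(if x.1 i = i ∧ x.2 i = false then (1:ℚ) else 0)) + 1 := by
      intro i; ring
    simp_rw [h1]
    rw [Finset.prod_add]
    apply Finset.sum_congr rfl
    intro t _
    rw [Finset.prod_const_one, mul_one]
    have h2 : ∀ i : Fin n, (-(if x.1 i = i ∧ x.2 i = false then (1:ℚ) else 0))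
        = (-1) * (if x.1 i = i ∧ x.2 i = false then (1:ℚ) else 0) := by
      intro i; ring
    rw [Finset.prod_congr rfl (fun i _ => h2 i), Finset.prod_mul_distrib,
      Finset.prod_const]
  simp_rw [hexp]
  rw [Finset.sum_comm]
  have hin : ∀ t ∈ (univ : Finset (Fin n)).powerset,
      ∑ x : Equiv.Perm (Fin n) × (Fin n → Bool),
        (-1:ℚ)^t.card * ∏ i ∈ t, (if x.1 i = i ∧ x.2 i = false then (1:ℚ) else 0)
      = (-1:ℚ)^t.card * (((n - t.card).factorial : ℚ) * 2^(n - t.card)) := by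
    intro t _
    rw [← Finset.mul_sum, N_eq]
  rw [Finset.sum_congr rfl hin]
  rw [Finset.sum_powerset_apply_card (fun c => (-1:ℚ)^c * (((n - c).factorial : ℚ) * 2^(n - c)))]
  rw [Finset.card_univ, Fintype.card_fin]
  apply Finset.sum_congr rfl
  intro j _
  rw [nsmul_eq_mul]
  try ring

lemma S_eq :
    ∑ x : Equiv.Perm (Fin n) × (Fin n → Bool),
        (if (∀ i, x.1 i = i → x.2 i = true) then (-1:ℚ)^(invP n x.1 + negc n x.2) else 0)
      = (-1:ℚ)^n := by
  have hpt : ∀ (π : Equiv.Perm (Fin n)) (ε : Fin n → Bool),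
      (if (∀ i, π i = i → ε i = true) then (-1:ℚ)^(invP n π + negc n ε) else 0)
        = (-1:ℚ)^(invP n π) *
          ∏ i : Fin n, (if (π i = i → ε i = true) then (if ε i = true then (-1:ℚ) else 1) else 0) := by
    intro π ε
    by_cases h : ∀ i, π i = i → ε i = true
    · rw [if_pos h, pow_add, negc_def, ← prod_ite_neg_one univ (fun i => ε i = true)]
      congr 1
      apply Finset.prod_congr rfl
      intro i _
      rw [if_pos (h i)]
    · rw [if_neg h]
      push_neg at h
      obtain ⟨i, hi1, hi2⟩ := h
      rw [Finset.prod_eq_zero (Finset.mem_univ i), mul_zero]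
      rw [if_neg]
      intro hcon
      exact hi2 (hcon hi1)
  rw [Fintype.sum_prod_type]
  have hsum : ∀ π : Equiv.Perm (Fin n),
      ∑ ε : Fin n → Bool,
        (if (∀ i, π i = i → ε i = true) then (-1:ℚ)^(invP n π + negc n ε) else 0)
      = (-1:ℚ)^(invP n π) *
          ∏ i : Fin n, (∑ b : Bool, (if (π i = i → b = true) then (if b = true then (-1:ℚ) else 1) else 0)) := by
    intro π
    simp_rw [hpt π]
    rw [← Finset.mul_sum]
    congr 1
    rw [Finset.prod_univ_sum (fun _ => (univ : Finset Bool))]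
    rw [Fintype.piFinset_univ]
  simp_rw [hsum]
  have hb : ∀ (π : Equiv.Perm (Fin n)) (i : Fin n),
      (∑ b : Bool, (if (π i = i → b = true) then (if b = true then (-1:ℚ) else 1) else 0))
        = if π i = i then (-1:ℚ) else 0 := by
    intro π i
    rw [Fintype.sum_bool]
    by_cases h : π i = i
    · rw [if_pos h]
      have c1 : (π i = i → true = true) := fun _ => rfl
      have c2 : ¬ (π i = i → false = true) := by simp [h]
      rw [if_pos c1, if_neg c2, if_pos rfl, add_zero]
    · rw [if_neg h]
      have c1 : (π i = i → true = true) := fun _ => rfl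
      have c2 : (π i = i → false = true) := fun hc => absurd hc h
      rw [if_pos c1, if_pos c2, if_pos rfl, if_neg (by simp)]
      ring
  have hprod : ∀ π : Equiv.Perm (Fin n),
      ∏ i : Fin n, (∑ b : Bool, (if (π i = i → b = true) then (if b = true then (-1:ℚ) else 1) else 0))
        = if π = 1 then (-1:ℚ)^n else 0 := by
    intro π
    rw [Finset.prod_congr rfl (fun i _ => hb π i)]
    by_cases h : π = 1
    · subst h
      rw [if_pos rfl]
      have : ∀ i : Fin n, ((1 : Equiv.Perm (Fin n)) i = i) := fun i => rfl
      rw [Finset.prod_congr rfl (fun i _ => if_pos (this i)), Finset.prod_const,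
        Finset.card_univ, Fintype.card_fin]
    · rw [if_neg h]
      have hex : ∃ i, π i ≠ i := by
        by_contra hc
        push_neg at hc
        exact h (Equiv.ext hc)
      obtain ⟨i, hi⟩ := hex
      exact Finset.prod_eq_zero (Finset.mem_univ i) (if_neg hi)
  simp_rw [hprod]
  simp_rw [mul_ite, mul_zero]
  rw [Finset.sum_ite_eq' Finset.univ (1 : Equiv.Perm (Fin n))
      (fun π => (-1:ℚ)^(invP n π) * (-1:ℚ)^n)]
  rw [if_pos (Finset.mem_univ _), invP_one, pow_zero, one_mul]


lemma two_card :
    2 * (((pairSet n)).card : ℚ)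
      = (∑ x : Equiv.Perm (Fin n) × (Fin n → Bool),
          (if (∀ i, x.1 i = i → x.2 i = true) then (1:ℚ) else 0))
        + (∑ x : Equiv.Perm (Fin n) × (Fin n → Bool),
          (if (∀ i, x.1 i = i → x.2 i = true) then (-1:ℚ)^(invP n x.1 + negc n x.2) else 0)) := by
  rw [← Finset.sum_add_distrib]
  have hcard : (((pairSet n)).card : ℚ) = ∑ x ∈ pairSet n, (1:ℚ) := by
    rw [Finset.sum_const, nsmul_eq_mul, mul_one]
  rw [hcard]
  unfold pairSet
  rw [Finset.sum_filter, Finset.mul_sum]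
  apply Finset.sum_congr rfl
  intro x _
  by_cases hg : ∀ i, x.1 i = i → x.2 i = true
  · by_cases he : Even (invP n x.1 + negc n x.2)
    · rw [if_pos ⟨hg, he⟩, if_pos hg, if_pos hg, Even.neg_one_pow he]
      norm_num
    · rw [if_neg (fun hc => he hc.2), if_pos hg, if_pos hg,
        Odd.neg_one_pow (Nat.not_even_iff_odd.mp he)]
      norm_num
  · rw [if_neg (fun hc => hg hc.1), if_neg hg, if_neg hg]
    norm_num

end SPaux

theorem stmt11 (n : ℕ) (hn : 1 ≤ n) :
    (dAB n : ℚ) = (n.factorial : ℚ) *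
        (∑ k ∈ Finset.range n, (2 : ℚ) ^ (n - k - 1) * (-1 : ℚ) ^ k / (k.factorial : ℚ))
      + (-1 : ℚ) ^ n := by
  classical
  have h2 : 2 * ((dAB n : ℚ))
      = (∑ j ∈ Finset.range (n+1),
          (n.choose j : ℚ) * ((-1)^j * (((n-j).factorial : ℚ) * 2^(n-j)))) + (-1:ℚ)^n := by
    rw [SPaux.dAB_eq_card]
    rw [SPaux.two_card, SPaux.T_eq, SPaux.S_eq]
  rw [Finset.sum_range_succ] at h2
  have hlast : (n.choose n : ℚ) * ((-1:ℚ)^n * (((n-n).factorial : ℚ) * 2^(n-n))) = (-1:ℚ)^n := by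
    simp [Nat.choose_self, Nat.sub_self]
  rw [hlast] at h2
  have hterm : ∀ j ∈ Finset.range n,
      (n.choose j : ℚ) * ((-1:ℚ)^j * (((n-j).factorial : ℚ) * 2^(n-j)))
        = 2 * ((n.factorial : ℚ) * ((2:ℚ)^(n-j-1) * (-1:ℚ)^j / (j.factorial : ℚ))) := by
    intro j hj
    have hj' : j < n := Finset.mem_range.mp hj
    have hfac : (n.choose j : ℚ) * ((n-j).factorial : ℚ) * (j.factorial : ℚ)
        = (n.factorial : ℚ) := by
      have hnat := Nat.choose_mul_factorial_mul_factorial (le_of_lt hj')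
      push_cast [← hnat]
      ring
    have h2p : (2:ℚ)^(n-j) = 2 * 2^(n-j-1) := by
      rw [← pow_succ']
      congr 1
      omega
    have hjf : (j.factorial : ℚ) ≠ 0 := Nat.cast_ne_zero.mpr (Nat.factorial_ne_zero j)
    field_simp
    rw [h2p]
    linear_combination (2 * 2^(n-j-1)) * hfac
  rw [Finset.sum_congr rfl hterm, ← Finset.mul_sum, ← Finset.mul_sum] at h2
  linarith [h2]
end

section
/- Let d^{AB}_n be the number of signed derangements in B_n of even type-B length. Then d^{AB}_1 = 0 and for all n ≥ 2, d^{AB}_n = 2n·d^{AB}_{n-1} + (-1)^n(n+1). -/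
open Finset

attribute [local instance 10] Classical.propDecidable

noncomputable def wordsD (n : ℕ) : Finset (Fin n → ℤ) :=
  (Fintype.piFinset fun _ : Fin n => Finset.Icc (-(n:ℤ)) (n:ℤ)).filter
    (fun w => isSignedPerm n w ∧ isDerang n w)

lemma mem_wordsD {n : ℕ} {w : Fin n → ℤ} :
    w ∈ wordsD n ↔ isSignedPerm n w ∧ isDerang n w := by
  simp only [wordsD, Finset.mem_filter, Fintype.mem_piFinset, Finset.mem_Icc, and_iff_right_iff_imp]
  rintro ⟨⟨h1, _⟩, _⟩ i
  have := (h1 i).1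
  have := (h1 i).2
  omega

lemma dAB_eq (n : ℕ) :
    dAB n = ((wordsD n).filter (fun w => Even (lenB n w))).card := by
  rw [dAB, ← Set.ncard_coe_finset]
  congr 1
  ext w
  simp only [Finset.coe_filter, Set.mem_setOf_eq, mem_wordsD]
  tauto

lemma exists_abs {n : ℕ} {w : Fin n → ℤ} (hw : isSignedPerm n w) {u : ℕ}
    (h1 : 1 ≤ u) (hu : u ≤ n) : ∃ m, (w m).natAbs = u := by
  have himg : (Finset.univ.image fun i => (w i).natAbs) = Finset.Icc 1 n := by
    apply Finset.eq_of_subset_of_card_le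
    · intro x hx
      simp only [Finset.mem_image] at hx
      obtain ⟨i, _, rfl⟩ := hx
      simp only [Finset.mem_Icc]
      exact hw.1 i
    · rw [Finset.card_image_of_injective _ hw.2]
      simp [Nat.card_Icc]
  have : u ∈ Finset.univ.image fun i => (w i).natAbs := by
    rw [himg]; simp only [Finset.mem_Icc]; exact ⟨h1, hu⟩
  simpa using this

lemma card_differ {n : ℕ} {w : Fin n → ℤ} (hw : isSignedPerm n w) (i : Fin n) :
    (Finset.univ.filter fun p : Fin n × Fin n =>
      ¬((p.1 < p.2 ∧ w p.2 < w p.1) ↔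
        (p.1 < p.2 ∧ Function.update w i (-(w i)) p.2 < Function.update w i (-(w i)) p.1))).card
      = (w i).natAbs - 1 := by
  set v := (w i).natAbs with hv
  set w' := Function.update w i (-(w i)) with hw'
  have habs : ∀ m : Fin n, m ≠ i → (w m).natAbs ≠ v := fun m hm h => hm (hw.2 h)
  have hchar : ∀ p : Fin n × Fin n,
      (¬((p.1 < p.2 ∧ w p.2 < w p.1) ↔ (p.1 < p.2 ∧ w' p.2 < w' p.1))) ↔
      ((p.1 = i ∧ i < p.2 ∧ (w p.2).natAbs < v) ∨
       (p.2 = i ∧ p.1 < i ∧ (w p.1).natAbs < v)) := by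
    rintro ⟨j, k⟩
    by_cases hjk : j < k
    · by_cases hj : j = i
      · subst hj
        have hk : k ≠ j := fun h => absurd h.symm (ne_of_lt hjk)
        have h1 := habs k hk
        simp only [hw', Function.update_of_ne hk, Function.update_self, hjk, hk,
          eq_self_iff_true, true_and, false_and, or_false, and_true, not_lt_of_gt hjk,
          false_and, and_false]
        constructor
        · intro h; omega
        · intro h; omega
      · by_cases hk : k = i
        · subst hk
          have h1 := habs j hj
          simp only [hw', Function.update_of_ne hj, Function.update_self, hjk, hj,
            eq_self_iff_true, true_and, false_and, false_or, and_true]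
          constructor
          · intro h; omega
          · intro h; omega
        · simp only [hw', Function.update_of_ne hj, Function.update_of_ne hk, hj, hk,
            false_and, or_self, iff_false, not_not, iff_self, not_true]
    · have h1 : ¬ (j = i ∧ i < k ∧ (w k).natAbs < v) := by
        rintro ⟨rfl, h2, -⟩; exact hjk h2
      have h2 : ¬ (k = i ∧ j < i ∧ (w j).natAbs < v) := by
        rintro ⟨rfl, h2, -⟩; exact hjk h2
      simp [hjk, h1, h2]
  have hv1 : 1 ≤ v := (hw.1 i).1
  have hvn : v ≤ n := (hw.1 i).2
  rw [show (w i).natAbs - 1 = (Finset.Ico 1 v).card by simp [Nat.card_Ico, hv]]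
  apply Finset.card_bij (fun p _ => (w p.1).natAbs + (w p.2).natAbs - v)
  · intro p hp
    rw [Finset.mem_filter, hchar] at hp
    rw [Finset.mem_Ico]
    rcases hp.2 with ⟨h1, -, h3⟩ | ⟨h1, -, h3⟩
    · rw [h1]; have := (hw.1 p.2).1; omega
    · rw [h1]; have := (hw.1 p.1).1; omega
  · intro p hp q hq hpq
    rw [Finset.mem_filter, hchar] at hp hq
    have key : ∀ a b : Fin n, (w a).natAbs = (w b).natAbs → a = b := fun a b h => hw.2 h
    rcases hp.2 with ⟨hp1, hp2, hp3⟩ | ⟨hp1, hp2, hp3⟩ <;>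
      rcases hq.2 with ⟨hq1, hq2, hq3⟩ | ⟨hq1, hq2, hq3⟩
    · rw [hp1, hq1] at hpq
      have : (w p.2).natAbs = (w q.2).natAbs := by omega
      have h22 := key _ _ this
      ext
      · rw [hp1, hq1]
      · rw [h22]
    · exfalso
      rw [hp1, hq1] at hpq
      have : (w p.2).natAbs = (w q.1).natAbs := by omega
      have h22 := key _ _ this
      rw [h22] at hp2
      exact lt_asymm hp2 hq2
    · exfalso
      rw [hp1, hq1] at hpq
      have : (w p.1).natAbs = (w q.2).natAbs := by omega
      have h22 := key _ _ this
      rw [h22] at hp2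
      exact lt_asymm hp2 hq2
    · rw [hp1, hq1] at hpq
      have : (w p.1).natAbs = (w q.1).natAbs := by omega
      have h22 := key _ _ this
      ext
      · rw [h22]
      · rw [hp1, hq1]
  · intro u hu
    rw [Finset.mem_Ico] at hu
    obtain ⟨m, hm⟩ := exists_abs hw hu.1 (le_trans (Nat.le_of_lt hu.2) hvn)
    have hmi : m ≠ i := by intro h; rw [h] at hm; omega
    rcases lt_or_gt_of_ne hmi with hmlt | hmlt
    · refine ⟨(m, i), ?_, ?_⟩
      · rw [Finset.mem_filter, hchar]
        exact ⟨Finset.mem_univ _, Or.inr ⟨rfl, hmlt, show (w m).natAbs < v by omega⟩⟩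
      · show (w m).natAbs + (w i).natAbs - v = u
        omega
    · refine ⟨(i, m), ?_, ?_⟩
      · rw [Finset.mem_filter, hchar]
        exact ⟨Finset.mem_univ _, Or.inl ⟨rfl, hmlt, show (w m).natAbs < v by omega⟩⟩
      · show (w i).natAbs + (w m).natAbs - v = u
        omega
lemma zmod2_add_self (a : ZMod 2) : a + a = 0 := by revert a; decide
lemma zmod2_neg (a : ZMod 2) : -a = a := by revert a; decide

lemma invW_flip {n : ℕ} {w : Fin n → ℤ} (hw : isSignedPerm n w) (i : Fin n) :
    ((invW n w : ZMod 2) + (invW n (Function.update w i (-(w i))) : ZMod 2))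
      = ((w i).natAbs : ZMod 2) + 1 := by
  set w' := Function.update w i (-(w i)) with hw'
  rw [invW, invW, Finset.card_filter, Finset.card_filter]
  push_cast
  rw [← Finset.sum_add_distrib]
  have step : ∀ p ∈ (Finset.univ : Finset (Fin n × Fin n)),
      ((if p.1 < p.2 ∧ w p.2 < w p.1 then (1 : ZMod 2) else 0) +
       (if p.1 < p.2 ∧ w' p.2 < w' p.1 then (1 : ZMod 2) else 0)) =
      (if ¬((p.1 < p.2 ∧ w p.2 < w p.1) ↔ (p.1 < p.2 ∧ w' p.2 < w' p.1)) then (1 : ZMod 2)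
        else 0) := by
    intro p _
    by_cases h1 : p.1 < p.2 ∧ w p.2 < w p.1 <;> by_cases h2 : p.1 < p.2 ∧ w' p.2 < w' p.1
    · rw [if_pos h1, if_pos h2, if_neg (by tauto), zmod2_add_self]
    · rw [if_pos h1, if_neg h2, if_pos (by tauto), add_zero]
    · rw [if_neg h1, if_pos h2, if_pos (by tauto), zero_add]
    · rw [if_neg h1, if_neg h2, if_neg (by tauto), add_zero]
  rw [Finset.sum_congr rfl step, Finset.sum_boole, card_differ hw i]
  have hv1 : 1 ≤ (w i).natAbs := (hw.1 i).1
  have : ((w i).natAbs - 1) + 1 = (w i).natAbs := by omega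
  calc (((w i).natAbs - 1 : ℕ) : ZMod 2)
      = (((w i).natAbs - 1 : ℕ) : ZMod 2) + (1 + 1) := by
        rw [zmod2_add_self (1 : ZMod 2)]; ring
    _ = ((((w i).natAbs - 1) + 1 : ℕ) : ZMod 2) + 1 := by push_cast; ring
    _ = ((w i).natAbs : ZMod 2) + 1 := by rw [this]

lemma neg_flip {n : ℕ} {w : Fin n → ℤ} (hw : isSignedPerm n w) (i : Fin n) :
    (((∑ m ∈ Finset.univ.filter (fun m : Fin n => w m < 0), w m : ℤ) : ZMod 2) +
     ((∑ m ∈ Finset.univ.filter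
        (fun m : Fin n => Function.update w i (-(w i)) m < 0),
          Function.update w i (-(w i)) m : ℤ) : ZMod 2))
      = ((w i).natAbs : ZMod 2) := by
  set w' := Function.update w i (-(w i)) with hw'
  rw [Finset.sum_filter, Finset.sum_filter]
  push_cast
  rw [← Finset.sum_add_distrib]
  rw [Finset.sum_eq_single_of_mem i (Finset.mem_univ i)]
  · have hne : w i ≠ 0 := by
      have := (hw.1 i).1; intro h; rw [h] at this; simp at this
    have hii : w' i = -(w i) := Function.update_self _ _ _
    rcases lt_or_gt_of_ne hne with hlt | hgt
    · have h1 : ¬ (w' i < 0) := by rw [hii]; omega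
      have habs : ((w i).natAbs : ℤ) = -(w i) := by omega
      rw [if_pos hlt, if_neg h1, add_zero,
        (Int.cast_natCast _).symm,
        habs]
      push_cast
      rw [zmod2_neg]
    · have h1 : ¬ (w i < 0) := by omega
      have h2 : w' i < 0 := by rw [hii]; omega
      have habs : ((w i).natAbs : ℤ) = w i := by omega
      rw [if_neg h1, if_pos h2, hii, zero_add,
        (Int.cast_natCast _).symm,
        habs]
      push_cast
      rw [zmod2_neg]
  · intro b _ hb
    rw [show w' b = w b from Function.update_of_ne hb _ _]
    exact zmod2_add_self _

lemma lenB_flip {n : ℕ} {w : Fin n → ℤ} (hw : isSignedPerm n w) (i : Fin n) :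
    ¬ Even (lenB n w + lenB n (Function.update w i (-(w i)))) := by
  set w' := Function.update w i (-(w i)) with hw'
  have hcast : ((lenB n w + lenB n w' : ℤ) : ZMod 2) = 1 := by
    rw [lenB, lenB]
    push_cast
    have h1 := invW_flip hw i
    have h2 := neg_flip hw i
    push_cast at h1 h2
    linear_combination h1 - h2
  rintro ⟨k, hk⟩
  rw [hk] at hcast
  push_cast at hcast
  rw [zmod2_add_self] at hcast
  exact absurd hcast (by decide)

lemma isSignedPerm_flip {n : ℕ} {w : Fin n → ℤ} (hw : isSignedPerm n w) (i : Fin n) :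
    isSignedPerm n (Function.update w i (-(w i))) := by
  have habs : (fun m => ((Function.update w i (-(w i))) m).natAbs)
      = fun m => (w m).natAbs := by
    funext m
    by_cases hm : m = i
    · subst hm; rw [Function.update_self, Int.natAbs_neg]
    · rw [Function.update_of_ne hm]
  constructor
  · intro m
    have := congrFun habs m
    rw [this]
    exact hw.1 m
  · rw [habs]
    exact hw.2

def w0 (n : ℕ) : Fin n → ℤ := fun i => -(((i : ℕ) : ℤ) + 1)

noncomputable def flipSet (n : ℕ) (w : Fin n → ℤ) : Finset (Fin n) :=
  Finset.univ.filter (fun j => w j ≠ w0 n j)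

noncomputable def iota (n : ℕ) (w : Fin n → ℤ) : Fin n → ℤ :=
  if h : (flipSet n w).Nonempty then
    Function.update w ((flipSet n w).min' h) (-(w ((flipSet n w).min' h)))
  else w

lemma flipSet_nonempty {n : ℕ} {w : Fin n → ℤ} (hne : w ≠ w0 n) :
    (flipSet n w).Nonempty := by
  by_contra h
  rw [Finset.not_nonempty_iff_eq_empty, flipSet, Finset.filter_eq_empty_iff] at h
  exact hne (funext fun i => not_not.mp (h (Finset.mem_univ i)))

lemma iota_eq {n : ℕ} {w : Fin n → ℤ} (hne : w ≠ w0 n) :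
    iota n w = Function.update w ((flipSet n w).min' (flipSet_nonempty hne))
      (-(w ((flipSet n w).min' (flipSet_nonempty hne)))) := by
  rw [iota, dif_pos (flipSet_nonempty hne)]

lemma iota_spec {n : ℕ} {w : Fin n → ℤ} (hw : w ∈ wordsD n) (hne : w ≠ w0 n) :
    iota n w ∈ wordsD n ∧ iota n w ≠ w0 n ∧ iota n (iota n w) = w ∧
      ¬ (Even (lenB n (iota n w)) ↔ Even (lenB n w)) := by
  obtain ⟨hsp, hder⟩ := mem_wordsD.mp hw
  have hF := flipSet_nonempty hne
  set i0 := (flipSet n w).min' hF with hi0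
  have hmem0 : i0 ∈ flipSet n w := Finset.min'_mem _ _
  have hflip0 : w i0 ≠ w0 n i0 := (Finset.mem_filter.mp hmem0).2
  rw [iota_eq hne, ← hi0]
  set w' := Function.update w i0 (-(w i0)) with hw'
  -- iota w is a signed derangement
  have hsp' : isSignedPerm n w' := isSignedPerm_flip hsp i0
  have hder' : isDerang n w' := by
    intro j
    by_cases hj : j = i0
    · subst hj
      rw [hw', Function.update_self]
      intro h
      apply hflip0
      rw [w0]
      omega
    · rw [hw', Function.update_of_ne hj]
      exact hder j
  have hmemD : w' ∈ wordsD n := mem_wordsD.mpr ⟨hsp', hder'⟩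
  -- iota w ≠ w0
  have hne' : w' ≠ w0 n := by
    intro h
    have : w' i0 = w0 n i0 := congrFun h i0
    rw [hw', Function.update_self] at this
    apply hder i0
    rw [w0] at this
    omega
  -- flipSet of w' has the same min
  have hFm : (flipSet n w').Nonempty := flipSet_nonempty hne'
  have hmin' : (flipSet n w').min' hFm = i0 := by
    have hmem0' : i0 ∈ flipSet n w' := by
      rw [flipSet, Finset.mem_filter]
      refine ⟨Finset.mem_univ _, ?_⟩
      rw [hw', Function.update_self]
      intro h
      apply hder i0
      rw [w0] at h
      omega
    apply le_antisymm (Finset.min'_le _ _ hmem0')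
    apply Finset.le_min'
    intro y hy
    by_cases hyi : y = i0
    · rw [hyi]
    · apply Finset.min'_le
      rw [flipSet, Finset.mem_filter] at hy ⊢
      refine ⟨Finset.mem_univ _, ?_⟩
      rw [hw', Function.update_of_ne hyi] at hy
      exact hy.2
  -- involution
  have hinv : iota n w' = w := by
    rw [iota_eq hne', hmin', hw', Function.update_idem, Function.update_self, neg_neg,
      Function.update_eq_self]
  refine ⟨hmemD, hne', hinv, ?_⟩
  -- parity flip
  have hodd := lenB_flip hsp i0
  rw [← hw'] at hodd
  intro hiff
  apply hodd
  rw [Int.even_add]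
  tauto
lemma w0_mem (n : ℕ) : w0 n ∈ wordsD n := by
  rw [mem_wordsD]
  refine ⟨⟨?_, ?_⟩, ?_⟩
  · intro i
    have := i.2
    simp only [w0]
    omega
  · intro a b h
    simp only [w0] at h
    have ha := a.2
    have hb := b.2
    apply Fin.ext
    omega
  · intro i
    simp only [w0]
    have : (0:ℤ) ≤ ((i:ℕ):ℤ) := by positivity
    omega

lemma card_diag (n : ℕ) :
    ((Finset.univ : Finset (Fin n × Fin n)).filter fun p => p.1 = p.2).card = n := by
  have key : ((Finset.univ : Finset (Fin n × Fin n)).filter fun p => p.1 = p.2).card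
      = (Finset.univ : Finset (Fin n)).card := by
    apply Finset.card_bij (fun p _ => p.1)
    · intro p _; exact Finset.mem_univ _
    · intro p hp q hq h
      rw [Finset.mem_filter] at hp hq
      ext
      · exact congrArg Fin.val h
      · rw [← hp.2, ← hq.2]; exact congrArg Fin.val h
    · intro i _
      exact ⟨(i, i), Finset.mem_filter.mpr ⟨Finset.mem_univ _, rfl⟩, rfl⟩
  simpa using key

lemma card_lt_half (n : ℕ) :
    2 * ((Finset.univ : Finset (Fin n × Fin n)).filter fun p => p.1 < p.2).card
      = n * n - n := by
  have hswap : ((Finset.univ : Finset (Fin n × Fin n)).filter fun p => p.1 < p.2).card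
      = ((Finset.univ : Finset (Fin n × Fin n)).filter fun p => p.2 < p.1).card := by
    apply Finset.card_nbij' Prod.swap Prod.swap
    · intro p hp
      simpa using hp
    · intro p hp
      simpa using hp
    · intro p _; exact Prod.swap_swap p
    · intro p _; exact Prod.swap_swap p
  have hsplit : ((Finset.univ : Finset (Fin n × Fin n)).filter fun p => p.1 < p.2).card
      + ((Finset.univ : Finset (Fin n × Fin n)).filter fun p => ¬ p.1 < p.2).card
      = n * n := by
    rw [Finset.card_filter_add_card_filter_not]
    simp [Finset.card_univ]
  have hsplit2 : ((Finset.univ : Finset (Fin n × Fin n)).filter fun p => ¬ p.1 < p.2)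
      = ((Finset.univ : Finset (Fin n × Fin n)).filter fun p => p.2 < p.1)
        ∪ ((Finset.univ : Finset (Fin n × Fin n)).filter fun p => p.1 = p.2) := by
    rw [← Finset.filter_or]
    apply Finset.filter_congr
    intro p _
    constructor
    · intro h
      rcases eq_or_lt_of_le (not_lt.mp h) with h' | h'
      · exact Or.inr h'.symm
      · exact Or.inl h'
    · rintro (h | h)
      · exact not_lt.mpr (le_of_lt h)
      · rw [h]; exact lt_irrefl _
  have hdisj : Disjoint
      ((Finset.univ : Finset (Fin n × Fin n)).filter fun p => p.2 < p.1)
      ((Finset.univ : Finset (Fin n × Fin n)).filter fun p => p.1 = p.2) := by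
    rw [Finset.disjoint_filter]
    intro p _ h h'
    rw [h'] at h
    exact lt_irrefl _ h
  rw [hsplit2, Finset.card_union_of_disjoint hdisj, card_diag] at hsplit
  omega

lemma lenB_w0 (n : ℕ) : lenB n (w0 n) = (n : ℤ) * n := by
  have hinv : invW n (w0 n)
      = ((Finset.univ : Finset (Fin n × Fin n)).filter fun p => p.1 < p.2).card := by
    rw [invW]
    congr 1
    apply Finset.filter_congr
    intro p _
    simp only [w0]
    constructor
    · intro h; exact h.1
    · intro h
      refine ⟨h, ?_⟩
      have : (p.1 : ℕ) < (p.2 : ℕ) := h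
      omega
  have hneg : (Finset.univ.filter fun i : Fin n => w0 n i < 0) = Finset.univ := by
    apply Finset.filter_true_of_mem
    intro i _
    simp only [w0]
    have : (0:ℤ) ≤ ((i:ℕ):ℤ) := by positivity
    omega
  have hsum : ∑ i : Fin n, w0 n i = -(((∑ i ∈ Finset.range n, i : ℕ) : ℤ) + n) := by
    simp only [w0]
    rw [Finset.sum_neg_distrib]
    congr 1
    rw [Finset.sum_add_distrib]
    have h1 : ∑ i : Fin n, ((i : ℕ) : ℤ) = ((∑ i ∈ Finset.range n, i : ℕ) : ℤ) := by
      rw [Nat.cast_sum]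
      exact Fin.sum_univ_eq_sum_range (fun i => ((i : ℕ) : ℤ)) n
    rw [h1]
    simp
  have hgauss : (∑ i ∈ Finset.range n, i) * 2 = n * (n - 1) := Finset.sum_range_id_mul_two n
  have hA := card_lt_half n
  rw [lenB, hinv, hneg, hsum]
  have hn1 : n * (n-1) = n * n - n := by
    cases n with
    | zero => rfl
    | succ k => rw [Nat.succ_sub_one, Nat.mul_succ, Nat.add_sub_cancel]
  rw [hn1] at hgauss
  have hnn : n ≤ n * n := by nlinarith
  have hcastnn : ((n * n : ℕ) : ℤ) = (n : ℤ) * n := by push_cast; ring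
  rw [← hcastnn]
  set m := n * n with hm
  omega
lemma diff_count (n : ℕ) :
    ((((wordsD n).filter (fun w => Even (lenB n w))).card : ℤ)
      - (((wordsD n).filter (fun w => ¬ Even (lenB n w))).card : ℤ)) = (-1 : ℤ)^n := by
  set Ae := (wordsD n).filter (fun w => Even (lenB n w)) with hAe
  set Ao := (wordsD n).filter (fun w => ¬ Even (lenB n w)) with hAo
  have hkey : (Ae.erase (w0 n)).card = (Ao.erase (w0 n)).card := by
    apply Finset.card_bij' (fun w _ => iota n w) (fun w _ => iota n w)
    · intro w hw
      rw [Finset.mem_erase, hAe, Finset.mem_filter] at hw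
      obtain ⟨hne, hmem, heven⟩ := hw
      obtain ⟨h1, h2, h3, h4⟩ := iota_spec hmem hne
      rw [Finset.mem_erase, hAo, Finset.mem_filter]
      exact ⟨h2, h1, fun h => h4 ⟨fun _ => heven, fun _ => h⟩⟩
    · intro w hw
      rw [Finset.mem_erase, hAo, Finset.mem_filter] at hw
      obtain ⟨hne, hmem, hodd⟩ := hw
      obtain ⟨h1, h2, h3, h4⟩ := iota_spec hmem hne
      rw [Finset.mem_erase, hAe, Finset.mem_filter]
      refine ⟨h2, h1, ?_⟩
      by_contra h
      exact h4 ⟨fun h' => absurd h' h, fun h' => absurd h' hodd⟩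
    · intro w hw
      rw [Finset.mem_erase, hAe, Finset.mem_filter] at hw
      exact (iota_spec hw.2.1 hw.1).2.2.1
    · intro w hw
      rw [Finset.mem_erase, hAo, Finset.mem_filter] at hw
      exact (iota_spec hw.2.1 hw.1).2.2.1
  have hw0 : w0 n ∈ wordsD n := w0_mem n
  have hparity : Even (lenB n (w0 n)) ↔ Even n := by
    rw [lenB_w0, Int.even_mul]
    constructor
    · rintro (h | h) <;> exact Int.even_coe_nat n |>.mp h
    · intro h; exact Or.inl (Int.even_coe_nat n |>.mpr h)
  rcases Nat.even_or_odd n with he | ho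
  · have hmemAe : w0 n ∈ Ae := by
      rw [hAe, Finset.mem_filter]; exact ⟨hw0, hparity.mpr he⟩
    have hmemAo : w0 n ∉ Ao := by
      rw [hAo, Finset.mem_filter]
      rintro ⟨-, h⟩; exact h (hparity.mpr he)
    have h1 : (Ae.erase (w0 n)).card + 1 = Ae.card := Finset.card_erase_add_one hmemAe
    have h2 : Ao.erase (w0 n) = Ao := Finset.erase_eq_of_notMem hmemAo
    rw [h2] at hkey
    rw [Even.neg_one_pow he]
    omega
  · have hmemAo : w0 n ∈ Ao := by
      rw [hAo, Finset.mem_filter]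
      refine ⟨hw0, fun h => ?_⟩
      rw [hparity] at h
      exact (Nat.not_even_iff_odd.mpr ho) h
    have hmemAe : w0 n ∉ Ae := by
      rw [hAe, Finset.mem_filter]
      rintro ⟨-, h⟩
      exact (Nat.not_even_iff_odd.mpr ho) (hparity.mp h)
    have h1 : (Ao.erase (w0 n)).card + 1 = Ao.card := Finset.card_erase_add_one hmemAo
    have h2 : Ae.erase (w0 n) = Ae := Finset.erase_eq_of_notMem hmemAe
    rw [h2] at hkey
    rw [Odd.neg_one_pow ho]
    omega

noncomputable def pairsD (n : ℕ) : Finset (Equiv.Perm (Fin n) × (Fin n → Bool)) :=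
  Finset.univ.filter (fun p => ∀ i, ¬(p.1 i = i ∧ p.2 i = false))

def hseq (n : ℕ) : ℤ :=
  ∑ j ∈ Finset.range (n+1),
    (-1:ℤ)^j * (n.choose j) * 2^(n-j) * ((n-j).factorial)

lemma bool_count (n : ℕ) (T : Finset (Fin n)) :
    (Finset.univ.filter (fun ε : Fin n → Bool => ∀ i ∈ T, ε i = false)).card
      = 2^(n - T.card) := by
  have e : {ε : Fin n → Bool // ∀ i ∈ T, ε i = false} ≃ ({i : Fin n // i ∉ T} → Bool) :=
    { toFun := fun ε i => ε.1 i.1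
      invFun := fun g => ⟨fun i => if h : i ∈ T then false else g ⟨i, h⟩,
        fun i hi => by simp [hi]⟩
      left_inv := by
        rintro ⟨ε, hε⟩
        ext i
        by_cases hi : i ∈ T
        · simp [hi, (hε i hi).symm]
        · simp [hi]
      right_inv := by
        intro g
        funext i
        simp [i.2] }
  rw [← Fintype.card_subtype, Fintype.card_congr e, Fintype.card_fun]
  have : Fintype.card {i : Fin n // i ∉ T} = n - T.card := by
    rw [Fintype.card_subtype_compl, Fintype.card_fin, Fintype.card_coe]
  rw [this, Fintype.card_bool]

lemma perm_count (n : ℕ) (T : Finset (Fin n)) :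
    (Finset.univ.filter (fun π : Equiv.Perm (Fin n) => ∀ i ∈ T, π i = i)).card
      = (n - T.card).factorial := by
  have e : {π : Equiv.Perm (Fin n) // ∀ i ∈ T, π i = i}
      ≃ Equiv.Perm {i : Fin n // i ∉ T} := by
    refine Equiv.symm ?_
    refine (Equiv.Perm.subtypeEquivSubtypePerm (fun i => i ∉ T)).trans
      (Equiv.subtypeEquivRight ?_)
    intro π
    constructor
    · intro h i hi
      exact h i (not_not.mpr hi)
    · intro h i hi
      exact h i (not_not.mp hi)
  rw [← Fintype.card_subtype, Fintype.card_congr e, Fintype.card_perm]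
  congr 1
  rw [Fintype.card_subtype_compl, Fintype.card_fin, Fintype.card_coe]

lemma pair_fix_count (n : ℕ) (T : Finset (Fin n)) :
    ((Finset.univ.filter (fun p : Equiv.Perm (Fin n) × (Fin n → Bool) =>
      (∀ i ∈ T, p.1 i = i) ∧ (∀ i ∈ T, p.2 i = false))).card : ℤ)
      = 2^(n - T.card) * (n - T.card).factorial := by
  have e : {p : Equiv.Perm (Fin n) × (Fin n → Bool) //
        (∀ i ∈ T, p.1 i = i) ∧ (∀ i ∈ T, p.2 i = false)}
      ≃ {π : Equiv.Perm (Fin n) // ∀ i ∈ T, π i = i}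
        × {ε : Fin n → Bool // ∀ i ∈ T, ε i = false} :=
    Equiv.subtypeProdEquivProd (p := fun π : Equiv.Perm (Fin n) => ∀ i ∈ T, π i = i)
      (q := fun ε : Fin n → Bool => ∀ i ∈ T, ε i = false)
  rw [← Fintype.card_subtype, Fintype.card_congr e, Fintype.card_prod,
    Fintype.card_subtype, Fintype.card_subtype, perm_count, bool_count]
  push_cast
  ring

lemma pairsD_card (n : ℕ) : ((pairsD n).card : ℤ) = hseq n := by
  classical
  set bad : Equiv.Perm (Fin n) × (Fin n → Bool) → Finset (Fin n) :=
    fun p => Finset.univ.filter (fun i => p.1 i = i ∧ p.2 i = false) with hbad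
  have h1 : ((pairsD n).card : ℤ)
      = ∑ p : Equiv.Perm (Fin n) × (Fin n → Bool), if bad p = ∅ then (1:ℤ) else 0 := by
    rw [pairsD, Finset.card_filter]
    push_cast
    apply Finset.sum_congr rfl
    intro p _
    have : (∀ i, ¬(p.1 i = i ∧ p.2 i = false)) ↔ bad p = ∅ := by
      rw [hbad, Finset.filter_eq_empty_iff]
      simp
    by_cases h : bad p = ∅
    · rw [if_pos (this.mpr h), if_pos h]
    · rw [if_neg (fun hc => h (this.mp hc)), if_neg h]
  rw [h1]
  have h2 : ∀ p : Equiv.Perm (Fin n) × (Fin n → Bool),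
      (if bad p = ∅ then (1:ℤ) else 0)
        = ∑ T ∈ (Finset.univ : Finset (Fin n)).powerset,
            if T ⊆ bad p then (-1:ℤ)^T.card else 0 := by
    intro p
    calc (if bad p = ∅ then (1:ℤ) else 0)
        = ∑ T ∈ (bad p).powerset, (-1:ℤ)^T.card :=
          (Finset.sum_powerset_neg_one_pow_card (x := bad p)).symm
      _ = ∑ T ∈ (bad p).powerset, (if T ⊆ bad p then (-1:ℤ)^T.card else 0) := by
          apply Finset.sum_congr rfl
          intro T hT
          rw [if_pos (Finset.mem_powerset.mp hT)]
      _ = ∑ T ∈ (Finset.univ : Finset (Fin n)).powerset,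
            (if T ⊆ bad p then (-1:ℤ)^T.card else 0) := by
          apply Finset.sum_subset (Finset.powerset_mono.mpr (Finset.subset_univ _))
          intro T _ hT
          rw [if_neg (fun hc => hT (Finset.mem_powerset.mpr hc))]
  simp_rw [h2]
  rw [Finset.sum_comm]
  have h3 : ∀ T : Finset (Fin n),
      (∑ p : Equiv.Perm (Fin n) × (Fin n → Bool), if T ⊆ bad p then (-1:ℤ)^T.card else 0)
        = (-1:ℤ)^T.card * (2^(n - T.card) * (n - T.card).factorial) := by
    intro T
    have hiff : ∀ p : Equiv.Perm (Fin n) × (Fin n → Bool),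
        T ⊆ bad p ↔ ((∀ i ∈ T, p.1 i = i) ∧ (∀ i ∈ T, p.2 i = false)) := by
      intro p
      rw [hbad]
      constructor
      · intro h
        constructor
        · intro i hi; exact ((Finset.mem_filter.mp (h hi)).2).1
        · intro i hi; exact ((Finset.mem_filter.mp (h hi)).2).2
      · rintro ⟨ha, hb⟩ i hi
        exact Finset.mem_filter.mpr ⟨Finset.mem_univ _, ha i hi, hb i hi⟩
    calc (∑ p : Equiv.Perm (Fin n) × (Fin n → Bool), if T ⊆ bad p then (-1:ℤ)^T.card else 0)
        = ∑ p ∈ Finset.univ.filter (fun p : Equiv.Perm (Fin n) × (Fin n → Bool) =>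
            (∀ i ∈ T, p.1 i = i) ∧ (∀ i ∈ T, p.2 i = false)), (-1:ℤ)^T.card := by
          rw [Finset.sum_filter]
          apply Finset.sum_congr rfl
          intro p _
          by_cases h : T ⊆ bad p
          · rw [if_pos h, if_pos ((hiff p).mp h)]
          · rw [if_neg h, if_neg (fun hc => h ((hiff p).mpr hc))]
      _ = (-1:ℤ)^T.card * (2^(n - T.card) * (n - T.card).factorial) := by
          rw [Finset.sum_const, nsmul_eq_mul, mul_comm, pair_fix_count]
  simp_rw [h3]
  rw [Finset.sum_powerset]
  have hcard : (Finset.univ : Finset (Fin n)).card = n := by simp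
  rw [hcard, hseq]
  apply Finset.sum_congr rfl
  intro j hj
  have : ∀ T ∈ Finset.powersetCard j (Finset.univ : Finset (Fin n)),
      (-1:ℤ)^T.card * (2^(n - T.card) * (n - T.card).factorial)
        = (-1:ℤ)^j * (2^(n - j) * (n - j).factorial) := by
    intro T hT
    rw [(Finset.mem_powersetCard.mp hT).2]
  rw [Finset.sum_congr rfl this, Finset.sum_const, Finset.card_powersetCard, hcard,
    nsmul_eq_mul]
  push_cast
  ring

lemma hseq_succ (m : ℕ) : hseq (m+1) = 2*((m:ℤ)+1) * hseq m + (-1:ℤ)^(m+1) := by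
  rw [hseq, Finset.sum_range_succ]
  have hlast : (-1:ℤ)^(m+1) * ((m+1).choose (m+1)) * 2^((m+1)-(m+1))
      * (((m+1)-(m+1)).factorial) = (-1:ℤ)^(m+1) := by
    simp [Nat.choose_self]
  rw [hlast]
  congr 1
  rw [hseq, Finset.mul_sum]
  apply Finset.sum_congr rfl
  intro j hj
  rw [Finset.mem_range] at hj
  have hjm : j ≤ m := Nat.lt_succ_iff.mp hj
  have key : (m+1).choose j * ((m+1)-j).factorial = (m+1) * (m.choose j * (m-j).factorial) := by
    apply Nat.eq_of_mul_eq_mul_right (Nat.factorial_pos j)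
    have h1 := Nat.choose_mul_factorial_mul_factorial (Nat.le_succ_of_le hjm)
    have h2 := Nat.choose_mul_factorial_mul_factorial hjm
    calc (m+1).choose j * ((m+1)-j).factorial * j.factorial
        = (m+1).choose j * j.factorial * ((m+1)-j).factorial := by ring
      _ = (m+1).factorial := h1
      _ = (m+1) * m.factorial := Nat.factorial_succ m
      _ = (m+1) * (m.choose j * j.factorial * (m-j).factorial) := by rw [h2]
      _ = (m+1) * (m.choose j * (m-j).factorial) * j.factorial := by ring
  have hexp : (m+1) - j = (m-j) + 1 := by omega
  rw [hexp] at key ⊢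
  rw [pow_succ]
  have keyZ : ((m+1).choose j : ℤ) * (((m-j)+1).factorial : ℤ)
      = ((m:ℤ)+1) * ((m.choose j : ℤ) * ((m-j).factorial : ℤ)) := by
    exact_mod_cast congrArg (Nat.cast : ℕ → ℤ) key
  linear_combination ((-1:ℤ)^j * 2^(m-j) * 2) * keyZ

noncomputable def permOf {n : ℕ} (w : Fin n → ℤ) (hw : isSignedPerm n w) :
    Equiv.Perm (Fin n) :=
  Equiv.ofBijective (fun i => (⟨(w i).natAbs - 1, by have := hw.1 i; omega⟩ : Fin n))
    (Finite.injective_iff_bijective.mp (fun a b h => by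
      apply hw.2
      have h' : (w a).natAbs - 1 = (w b).natAbs - 1 := congrArg Fin.val h
      have ha := hw.1 a
      have hb := hw.1 b
      show (w a).natAbs = (w b).natAbs
      omega))

lemma permOf_apply {n : ℕ} (w : Fin n → ℤ) (hw : isSignedPerm n w) (i : Fin n) :
    ((permOf w hw) i : ℕ) = (w i).natAbs - 1 := rfl

lemma words_pairs_card (n : ℕ) : (wordsD n).card = (pairsD n).card := by
  refine Finset.card_bij'
    (fun w hw => ((permOf w (mem_wordsD.mp hw).1, fun i => decide (w i < 0)) :
      Equiv.Perm (Fin n) × (Fin n → Bool)))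
    (fun p _ => (fun i => if p.2 i then -(((p.1 i : ℕ) : ℤ) + 1) else ((p.1 i : ℕ) : ℤ) + 1 :
      Fin n → ℤ)) ?_ ?_ ?_ ?_
  · -- forward membership
    intro w hw
    obtain ⟨hsp, hder⟩ := mem_wordsD.mp hw
    simp only [pairsD, Finset.mem_filter]
    refine ⟨Finset.mem_univ _, ?_⟩
    rintro k ⟨h1, h2⟩
    have hval : (w k).natAbs - 1 = (k : ℕ) := by
      rw [← permOf_apply w hsp k]
      exact congrArg Fin.val h1
    have hpos : ¬ (w k < 0) := by
      simpa using h2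
    have hb := hsp.1 k
    apply hder k
    omega
  · -- backward membership
    intro p hp
    simp only [pairsD, Finset.mem_filter] at hp
    rw [mem_wordsD]
    constructor
    · constructor
      · intro i
        have := (p.1 i).2
        by_cases h : p.2 i <;> simp [h] <;> omega
      · intro a b hab
        simp only at hab
        have ha : ∀ i, ((if p.2 i then -(((p.1 i : ℕ) : ℤ) + 1)
            else ((p.1 i : ℕ) : ℤ) + 1)).natAbs = (p.1 i : ℕ) + 1 := by
          intro i
          by_cases h : p.2 i <;> simp [h] <;> omega
        rw [ha a, ha b] at hab
        have : p.1 a = p.1 b := Fin.ext (by omega)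
        exact p.1.injective this
    · intro i h
      simp only at h
      by_cases hε : p.2 i
      · simp only [hε, if_true] at h
        have h1 : (0:ℤ) ≤ ((p.1 i : ℕ) : ℤ) := by positivity
        have h2 : (0:ℤ) ≤ ((i : ℕ) : ℤ) := by positivity
        omega
      · simp only [hε, if_false, Bool.false_eq_true] at h
        have : (p.1 i : ℕ) = (i : ℕ) := by omega
        exact hp.2 i ⟨Fin.ext this, by simpa using hε⟩
  · -- left inverse
    intro w hw
    obtain ⟨hsp, hder⟩ := mem_wordsD.mp hw
    funext i
    simp only
    have hb := hsp.1 i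
    have hval : (((permOf w hsp) i : ℕ) : ℤ) = ((w i).natAbs : ℤ) - 1 := by
      rw [permOf_apply]
      omega
    by_cases h : w i < 0
    · rw [if_pos (by simpa using h)]
      omega
    · rw [if_neg (by simpa using h)]
      omega
  · -- right inverse
    intro p hp
    have hval : ∀ k, ((if p.2 k then -(((p.1 k : ℕ) : ℤ) + 1)
        else ((p.1 k : ℕ) : ℤ) + 1)).natAbs = (p.1 k : ℕ) + 1 := by
      intro k
      by_cases h : p.2 k <;> simp [h] <;> omega
    refine Prod.ext ?_ ?_
    · simp only
      apply Equiv.ext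
      intro k
      apply Fin.ext
      rw [permOf_apply]
      rw [hval k]
      omega
    · simp only
      funext k
      have hnn : (0:ℤ) ≤ ((p.1 k : ℕ) : ℤ) := by positivity
      by_cases h : p.2 k
      · simp only [h, if_true, decide_eq_true_eq]
        omega
      · have hf : p.2 k = false := by simpa using h
        simp only [hf, Bool.false_eq_true, if_false, decide_eq_false_iff_not, not_lt]
        omega

lemma two_dAB (n : ℕ) : 2 * (dAB n : ℤ) = hseq n + (-1:ℤ)^n := by
  have hsplit := Finset.card_filter_add_card_filter_not
    (s := wordsD n) (p := fun w => Even (lenB n w))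
  have hdiff := diff_count n
  have hcard : ((wordsD n).card : ℤ) = hseq n := by
    rw [words_pairs_card]; exact pairsD_card n
  rw [dAB_eq]
  have hs : (((wordsD n).filter (fun w => Even (lenB n w))).card : ℤ)
      + (((wordsD n).filter (fun w => ¬ Even (lenB n w))).card : ℤ) = hseq n := by
    rw [← hcard]
    exact_mod_cast hsplit
  linarith

theorem stmt12 :
    dAB 1 = 0 ∧
    ∀ n : ℕ, 2 ≤ n →
      (dAB n : ℤ) = 2 * (n : ℤ) * (dAB (n - 1) : ℤ) + (-1 : ℤ) ^ n * ((n : ℤ) + 1) := by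
  constructor
  · have h := two_dAB 1
    have h1 : hseq 1 = 1 := by
      norm_num [hseq, Finset.sum_range_succ]
    rw [h1] at h
    norm_num at h
    exact_mod_cast h
  · intro n hn
    obtain ⟨m, rfl⟩ : ∃ m, n = m + 1 := ⟨n - 1, by omega⟩
    have h1 := two_dAB (m+1)
    have h2 := two_dAB m
    have h3 := hseq_succ m
    have hsub : m + 1 - 1 = m := rfl
    rw [hsub]
    have key : 2 * (dAB (m+1) : ℤ)
        = 2 * (2 * ((m:ℤ)+1) * (dAB m : ℤ) + (-1:ℤ)^(m+1) * (((m:ℤ)+1)+1)) := by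
      linear_combination h1 + h3 - (2*((m:ℤ)+1)) * h2
    have := mul_left_cancel₀ (by norm_num : (2:ℤ) ≠ 0) key
    push_cast
    push_cast at this
    linarith
end

section
/- Let d^{AB}_n be the number of signed derangements in B_n of even type-B length. Then d^{AB}_1 = 0, d^{AB}_2 = 3, and for all n ≥ 3, d^{AB}_n = (n-1)·(2·d^{AB}_{n-1} + 4·d^{AB}_{n-2} + (-1)^{n-1}). -/
open Finset

namespace Aux13

variable (n : ℕ)

abbrev P (n : ℕ) := Equiv.Perm (Fin n) × (Fin n → Bool)

def toW (p : P n) : Fin n → ℤ :=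
  fun i => if p.2 i then -(((p.1 i : ℕ) : ℤ) + 1) else ((p.1 i : ℕ) : ℤ) + 1

def Good (p : P n) : Prop := ∀ i, ¬(p.1 i = i ∧ p.2 i = false)

instance : DecidablePred (Good n) := fun _ => inferInstanceAs (Decidable (∀ _, _))

def invA (σ : Equiv.Perm (Fin n)) : ℕ := invW n (fun i => ((σ i : ℕ) : ℤ) + 1)

theorem σ_eq_aux {a b : Fin n} (h : ((a : ℕ) : ℤ) + 1 = ((b : ℕ) : ℤ) + 1) : a = b :=
  Fin.val_injective (by omega)

def cnt (ε : Fin n → Bool) : ℕ := (univ.filter fun i => ε i = true).card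

def D (n : ℕ) : ℕ := (univ.filter (Good n)).card

theorem even_int_iff (m : ℤ) : Even m ↔ ((m : ZMod 2) = 0) := by
  rw [ZMod.intCast_zmod_eq_zero_iff_dvd]
  constructor
  · rintro ⟨c, rfl⟩; exact ⟨c, by ring⟩
  · rintro ⟨c, rfl⟩; exact ⟨c, by ring⟩

theorem even_nat_iff (m : ℕ) : Even m ↔ ((m : ZMod 2) = 0) := by
  rw [ZMod.natCast_eq_zero_iff]
  constructor
  · rintro ⟨c, rfl⟩; exact ⟨c, by ring⟩
  · rintro ⟨c, rfl⟩; exact ⟨c, by ring⟩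

theorem card_lt (σ : Equiv.Perm (Fin n)) (i : Fin n) :
    (univ.filter fun j => σ j < σ i).card = (σ i : ℕ) := by
  have h : (univ.filter fun j => σ j < σ i)
      = (Finset.Iio (σ i)).map (Equiv.toEmbedding σ.symm) := by
    ext j
    simp only [Finset.mem_filter, Finset.mem_univ, true_and, Finset.mem_map,
      Finset.mem_Iio, Equiv.coe_toEmbedding]
    constructor
    · intro hj; exact ⟨σ j, hj, σ.symm_apply_apply j⟩
    · rintro ⟨k, hk, rfl⟩; simpa using hk
  rw [h, Finset.card_map, Fin.card_Iio]

-- parity lemma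
theorem lenB_parity (p : P n) :
    Even (lenB n (toW n p)) ↔ Even (invA n p.1 + cnt n p.2) := by
  classical
  obtain ⟨σ, ε⟩ := p
  set w : Fin n → ℤ := toW n (σ, ε) with hw
  rw [even_int_iff, even_nat_iff]
  -- the filter of negative entries is the filter of ε
  have hneg : (univ.filter fun i : Fin n => w i < 0) = univ.filter (fun i => ε i = true) := by
    ext i
    simp only [Finset.mem_filter, Finset.mem_univ, true_and, hw, toW]
    cases hi : ε i <;> simp [hi] <;> omega
  -- value of w on the two parts
  have hwneg : ∀ i, ε i = true → w i = -(((σ i : ℕ) : ℤ) + 1) := by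
    intro i hi; simp [hw, toW, hi]
  have hwpos : ∀ i, ε i = false → w i = ((σ i : ℕ) : ℤ) + 1 := by
    intro i hi; simp [hw, toW, hi]
  -- the function g for the double counting
  set g : Fin n × Fin n → ZMod 2 :=
    fun q => if ε q.1 = true ∧ σ q.2 < σ q.1 then 1 else 0 with hg
  -- sums over all pairs
  have claim3 : ∑ q : Fin n × Fin n, g q
      = ∑ i ∈ univ.filter (fun i => ε i = true), ((σ i : ℕ) : ZMod 2) := by
    rw [Fintype.sum_prod_type]
    have hinner : ∀ i, (∑ j, g (i, j)) = if ε i = true then ((σ i : ℕ) : ZMod 2) else 0 := by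
      intro i
      cases hi : ε i
      · simp [hg, hi]
      · rw [if_pos rfl, ← card_lt n σ i, ← Finset.sum_boole]
        refine Finset.sum_congr rfl fun j _ => ?_
        simp [hg, hi]
    rw [Finset.sum_congr rfl fun i _ => hinner i, ← Finset.sum_filter]
  -- split into upper and lower triangle
  have claim2 : ∑ q : Fin n × Fin n, g q
      = ∑ q ∈ univ.filter (fun q : Fin n × Fin n => q.1 < q.2), (g q + g q.swap) := by
    rw [Finset.sum_add_distrib]
    have hswap : ∑ q ∈ univ.filter (fun q : Fin n × Fin n => q.1 < q.2), g q.swap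
        = ∑ q ∈ univ.filter (fun q : Fin n × Fin n => q.2 < q.1), g q := by
      refine Finset.sum_nbij' (fun q => q.swap) (fun q => q.swap) ?_ ?_ ?_ ?_ ?_ <;>
        simp [Finset.mem_filter]
    rw [hswap]
    rw [← Finset.sum_filter_add_sum_filter_not univ (fun q : Fin n × Fin n => q.1 < q.2) g]
    congr 1
    have h0 : ∑ q ∈ univ.filter (fun q : Fin n × Fin n => ¬ q.1 < q.2), g q
        = ∑ q ∈ univ.filter (fun q : Fin n × Fin n => ¬ q.1 < q.2),
            (if q.2 < q.1 then g q else 0) := by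
      refine Finset.sum_congr rfl fun q hq => ?_
      rcases lt_trichotomy q.1 q.2 with h | h | h
      · exact absurd h (Finset.mem_filter.1 hq).2
      · rw [if_neg (by rw [h]; exact lt_irrefl _), hg]
        simp only
        rw [if_neg (by rw [← h]; rintro ⟨-, hlt⟩; exact lt_irrefl _ hlt)]
      · rw [if_pos h]
    rw [h0, ← Finset.sum_filter, Finset.filter_filter]
    refine Finset.sum_congr ?_ fun _ _ => rfl
    ext q
    simp only [Finset.mem_filter, Finset.mem_univ, true_and]
    constructor
    · rintro ⟨-, h⟩; exact h
    · intro h; exact ⟨by omega, h⟩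
  -- pointwise identity on the upper triangle
  have claimPW : ∀ q : Fin n × Fin n, q.1 < q.2 →
      ((if w q.2 < w q.1 then (1 : ZMod 2) else 0)
        + (if ((σ q.2 : ℕ) : ℤ) + 1 < ((σ q.1 : ℕ) : ℤ) + 1 then (1 : ZMod 2) else 0))
      = g q + g q.swap := by
    rintro ⟨i, j⟩ hij
    have hne : (σ i : ℕ) ≠ (σ j : ℕ) := by
      intro h
      exact absurd (σ.injective (Fin.val_injective h)) (Fin.ne_of_lt hij)
    simp only [hg, Prod.swap_prod_mk]
    cases hi : ε i <;> cases hj : ε j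
    · rw [hwpos i hi, hwpos j hj]
      simp only [hi, hj, Bool.false_eq_true, false_and, if_false, Fin.lt_iff_val_lt_val]
      split_ifs <;> first | decide | (exfalso; omega)
    · rw [hwpos i hi, hwneg j hj]
      simp only [hi, hj, Bool.false_eq_true, false_and, if_false, true_and,
        Fin.lt_iff_val_lt_val]
      split_ifs <;> first | decide | (exfalso; omega)
    · rw [hwneg i hi, hwpos j hj]
      simp only [hi, hj, Bool.false_eq_true, false_and, if_false, true_and,
        Fin.lt_iff_val_lt_val]
      split_ifs <;> first | decide | (exfalso; omega)
    · rw [hwneg i hi, hwneg j hj]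
      simp only [hi, hj, true_and, Fin.lt_iff_val_lt_val]
      split_ifs <;> first | decide | (exfalso; omega)
  -- the casts of the two inversion numbers
  have hinvW : ((invW n w : ℕ) : ZMod 2)
      = ∑ q ∈ univ.filter (fun q : Fin n × Fin n => q.1 < q.2),
          (if w q.2 < w q.1 then (1 : ZMod 2) else 0) := by
    rw [Finset.sum_boole, Finset.filter_filter, invW]
  have hinvA : ((invA n σ : ℕ) : ZMod 2)
      = ∑ q ∈ univ.filter (fun q : Fin n × Fin n => q.1 < q.2),
          (if ((σ q.2 : ℕ) : ℤ) + 1 < ((σ q.1 : ℕ) : ℤ) + 1 then (1 : ZMod 2) else 0) := by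
    rw [Finset.sum_boole, Finset.filter_filter, invA, invW]
  have hxx : ∀ x : ZMod 2, x + x = 0 := by decide
  have hneg2 : ∀ x : ZMod 2, -x = x := by decide
  have eq1 : ((invW n w : ℕ) : ZMod 2) + ((invA n σ : ℕ) : ZMod 2)
      = ∑ i ∈ univ.filter (fun i => ε i = true), ((σ i : ℕ) : ZMod 2) := by
    rw [hinvW, hinvA, ← Finset.sum_add_distrib, ← claim3, claim2]
    exact Finset.sum_congr rfl fun q hq => claimPW q (Finset.mem_filter.1 hq).2
  have main : ((invW n w : ℕ) : ZMod 2)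
        + ∑ i ∈ univ.filter (fun i => ε i = true), ((σ i : ℕ) : ZMod 2)
      = ((invA n σ : ℕ) : ZMod 2) := by
    rw [← eq1]
    calc ((invW n w : ℕ) : ZMod 2) + (((invW n w : ℕ) : ZMod 2) + ((invA n σ : ℕ) : ZMod 2))
        = (((invW n w : ℕ) : ZMod 2) + ((invW n w : ℕ) : ZMod 2)) + ((invA n σ : ℕ) : ZMod 2) := by
          ring
      _ = ((invA n σ : ℕ) : ZMod 2) := by rw [hxx, zero_add]
  -- compute the cast of lenB
  have hterm : ∀ i ∈ univ.filter (fun i : Fin n => ε i = true),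
      ((w i : ℤ) : ZMod 2) = ((σ i : ℕ) : ZMod 2) + 1 := by
    intro i hi
    rw [hwneg i (Finset.mem_filter.1 hi).2]
    push_cast
    rw [hneg2]
  have hsum : (∑ i ∈ univ.filter (fun i : Fin n => ε i = true), ((w i : ℤ) : ZMod 2))
      = (∑ i ∈ univ.filter (fun i : Fin n => ε i = true), ((σ i : ℕ) : ZMod 2))
        + ((cnt n ε : ℕ) : ZMod 2) := by
    rw [Finset.sum_congr rfl hterm, Finset.sum_add_distrib, Finset.sum_const,
      nsmul_eq_mul, mul_one, cnt]
  have hlen : ((lenB n w : ℤ) : ZMod 2) = ((invA n σ : ℕ) : ZMod 2) + ((cnt n ε : ℕ) : ZMod 2) := by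
    rw [lenB, hneg]
    push_cast
    rw [hsum, sub_eq_add_neg, hneg2, ← add_assoc, main]
  rw [hlen, Nat.cast_add]

theorem toW_natAbs (p : P n) (i : Fin n) : (toW n p i).natAbs = (p.1 i : ℕ) + 1 := by
  cases h : p.2 i <;> simp only [toW, h, if_true, if_false, Bool.false_eq_true] <;> omega

theorem toW_injective : Function.Injective (toW n) := by
  intro p q h
  have key : ∀ i, p.1 i = q.1 i ∧ p.2 i = q.2 i := by
    intro i
    have hi := congrFun h i
    simp only [toW] at hi
    cases h1 : p.2 i <;> cases h2 : q.2 i <;> rw [h1, h2] at hi <;>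
      simp only [if_true, if_false, Bool.false_eq_true] at hi
    · exact ⟨σ_eq_aux _ hi, rfl⟩
    · exact absurd hi (by omega)
    · exact absurd hi (by omega)
    · exact ⟨σ_eq_aux _ (by omega), rfl⟩
  obtain ⟨σp, εp⟩ := p
  obtain ⟨σq, εq⟩ := q
  have h1 : σp = σq := Equiv.ext fun i => (key i).1
  have h2 : εp = εq := funext fun i => (key i).2
  rw [h1, h2]

theorem isSP (p : P n) : isSignedPerm n (toW n p) := by
  constructor
  · intro i
    rw [toW_natAbs]
    have := (p.1 i).isLt
    omega
  · intro i j hij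
    simp only [toW_natAbs] at hij
    exact p.1.injective (Fin.val_injective (by omega))

theorem derang_iff (p : P n) : isDerang n (toW n p) ↔ Good n p := by
  unfold isDerang Good
  refine forall_congr' fun i => ?_
  cases h : p.2 i <;> simp only [toW, h, if_true, if_false, Bool.false_eq_true]
  · have hval : ((p.1 i : ℕ) : ℤ) + 1 = ((i : ℕ) : ℤ) + 1 ↔ p.1 i = i := by
      constructor
      · intro hh; exact Fin.val_injective (by omega)
      · intro hh; rw [hh]
    constructor
    · intro hh
      rintro ⟨h1, -⟩
      exact hh (hval.2 h1)
    · intro hh hcontra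
      exact hh ⟨hval.1 hcontra, trivial⟩
  · constructor
    · intro _ ; rintro ⟨-, hc⟩; exact absurd hc (by simp)
    · intro _ ; intro hc; omega

-- bijection lemma
theorem dAB_eq : dAB n =
    (univ.filter fun p : P n => Good n p ∧ Even (invA n p.1 + cnt n p.2)).card := by
  classical
  have hset : {w : Fin n → ℤ | isSignedPerm n w ∧ isDerang n w ∧ Even (lenB n w)}
      = toW n '' {p : P n | Good n p ∧ Even (invA n p.1 + cnt n p.2)} := by
    ext v
    constructor
    · rintro ⟨⟨hbounds, hinj⟩, hd, he⟩
      set f : Fin n → Fin n := fun i => ⟨(v i).natAbs - 1, by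
        have h1 := (hbounds i).1; have h2 := (hbounds i).2; omega⟩ with hf
      have hfinj : Function.Injective f := by
        intro i j hij
        apply hinj
        have h1 := (hbounds i).1
        have h2 := (hbounds j).1
        have hval := congrArg Fin.val hij
        have hvi : (f i : ℕ) = (v i).natAbs - 1 := rfl
        have hvj : (f j : ℕ) = (v j).natAbs - 1 := rfl
        show (v i).natAbs = (v j).natAbs
        omega
      set σ : Equiv.Perm (Fin n) := Equiv.ofBijective f (Finite.injective_iff_bijective.1 hfinj)
        with hσ
      set ε : Fin n → Bool := fun i => decide (v i < 0) with hε
      have htoW : toW n (σ, ε) = v := by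
        funext i
        have h1 := (hbounds i).1
        have hσi : ((σ i : ℕ) : ℤ) + 1 = ((v i).natAbs : ℤ) := by
          have : (σ i : ℕ) = (v i).natAbs - 1 := rfl
          omega
        simp only [toW, hε]
        by_cases hvi : v i < 0
        · rw [if_pos (by simpa using hvi), hσi]
          omega
        · rw [if_neg (by simpa using hvi), hσi]
          omega
      refine ⟨(σ, ε), ⟨?_, ?_⟩, htoW⟩
      · exact (derang_iff n (σ, ε)).1 (htoW ▸ hd)
      · exact (lenB_parity n (σ, ε)).1 (htoW ▸ he)
    · rintro ⟨p, ⟨hgood, heven⟩, rfl⟩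
      exact ⟨isSP n p, (derang_iff n p).2 hgood, (lenB_parity n p).2 heven⟩
  rw [dAB, hset, Set.ncard_image_of_injective _ (toW_injective n),
    Set.ncard_eq_toFinset_card', Set.toFinset_setOf]

-- sign sum
theorem invA_id : invA n 1 = 0 := by
  unfold invA invW
  rw [Finset.card_eq_zero, Finset.filter_eq_empty_iff]
  rintro p -
  rintro ⟨h1, h2⟩
  rw [Fin.lt_iff_val_lt_val] at h1
  simp only [Equiv.Perm.one_apply] at h2
  omega

theorem signsum :
    ∑ p ∈ univ.filter (Good n), ((-1 : ℤ) ^ (invA n p.1 + cnt n p.2)) = (-1) ^ n := by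
  classical
  have hg : ∀ ε : Fin n → Bool, ((-1:ℤ)) ^ (cnt n ε) = ∏ i, (if ε i then (-1:ℤ) else 1) := by
    intro ε
    rw [Finset.prod_ite, Finset.prod_const, Finset.prod_const_one, mul_one]
    rfl
  have key : ∀ p : P n, ((-1 : ℤ) ^ (invA n p.1 + cnt n p.2)) =
      (-1 : ℤ) ^ (invA n p.1) * ∏ i, (if p.2 i then (-1:ℤ) else 1) := by
    intro p; rw [pow_add, hg]
  rw [Finset.sum_congr rfl fun p hp => key p, Finset.sum_filter]
  have hfil : ∀ σ : Equiv.Perm (Fin n),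
      (univ.filter fun ε : Fin n → Bool => Good n (σ, ε)) =
      Fintype.piFinset (fun i => if σ i = i then ({true} : Finset Bool) else univ) := by
    intro σ
    ext ε
    rw [Finset.mem_filter_univ]
    simp only [Finset.mem_filter, Finset.mem_univ, true_and, Fintype.mem_piFinset, Good]
    refine forall_congr' fun i => ?_
    split_ifs with hi <;> simp [hi]
  have hinner : ∀ σ : Equiv.Perm (Fin n),
      ∑ ε : Fin n → Bool, (if Good n (σ, ε) then
        (-1 : ℤ) ^ (invA n σ) * ∏ i, (if ε i then (-1:ℤ) else 1) else 0) =
      (-1 : ℤ) ^ (invA n σ) * ∏ i, (if σ i = i then (-1 : ℤ) else 0) := by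
    intro σ
    rw [← Finset.sum_filter, hfil σ, ← Finset.mul_sum]
    congr 1
    rw [← Finset.prod_univ_sum (fun i => if σ i = i then ({true} : Finset Bool) else univ)
      (fun _ b => if b then (-1:ℤ) else 1)]
    refine Finset.prod_congr rfl fun i _ => ?_
    split_ifs with hi <;> simp
  calc ∑ p : P n, (if Good n p then
        (-1 : ℤ) ^ (invA n p.1) * ∏ i, (if p.2 i then (-1:ℤ) else 1) else 0)
      = ∑ σ : Equiv.Perm (Fin n), (-1 : ℤ) ^ (invA n σ) *
          ∏ i, (if σ i = i then (-1 : ℤ) else 0) := by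
        rw [Fintype.sum_prod_type]
        exact Finset.sum_congr rfl fun σ _ => hinner σ
    _ = (-1) ^ n := by
        rw [Finset.sum_eq_single 1]
        · rw [invA_id, pow_zero, one_mul]
          rw [Finset.prod_congr rfl fun i _ => if_pos (Equiv.Perm.one_apply i)]
          simp
        · intro σ _ hσ
          obtain ⟨i, hi⟩ : ∃ i, σ i ≠ i := by
            by_contra h
            push_neg at h
            exact hσ (Equiv.ext h)
          rw [Finset.prod_eq_zero (Finset.mem_univ i)
            (if_neg hi : (if σ i = i then (-1:ℤ) else 0) = 0), mul_zero]
        · intro h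
          exact absurd (Finset.mem_univ 1) h


theorem two_mul_dAB : 2 * (dAB n : ℤ) = (D n : ℤ) + (-1) ^ n := by
  classical
  have hs := signsum n
  set G := univ.filter (Good n) with hG
  set q : P n → Prop := fun p => Even (invA n p.1 + cnt n p.2) with hq
  rw [← Finset.sum_filter_add_sum_filter_not G q] at hs
  have h1 : ∑ p ∈ G.filter q, ((-1:ℤ)) ^ (invA n p.1 + cnt n p.2) = ((G.filter q).card : ℤ) := by
    rw [Finset.sum_congr rfl (fun p hp => Even.neg_one_pow (Finset.mem_filter.1 hp).2)]
    simp [hq]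
  have h2 : ∑ p ∈ G.filter (fun p => ¬ q p), ((-1:ℤ)) ^ (invA n p.1 + cnt n p.2) =
      -((G.filter (fun p => ¬ q p)).card : ℤ) := by
    rw [Finset.sum_congr rfl (fun p hp => Odd.neg_one_pow
      (Nat.not_even_iff_odd.1 (Finset.mem_filter.1 hp).2))]
    simp [hq, Nat.not_even_iff_odd]
  have hcard : (G.filter q).card + (G.filter (fun p => ¬ q p)).card = G.card :=
    Finset.card_filter_add_card_filter_not q
  have hA : dAB n = (G.filter q).card := by
    rw [dAB_eq n, hG, Finset.filter_filter]
  rw [h1, h2] at hs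
  have hDcard : D n = G.card := rfl
  rw [hA, hDcard, ← hcard]
  push_cast
  linarith

theorem D_zero : D 0 = 1 := by decide

def E (k : ℕ) : ℤ :=
  ∑ j ∈ Finset.range (k+1),
    (-1:ℤ)^j * (k.choose j) * (Nat.factorial (k-j)) * 2^(k-j)

theorem card_sigma_fix (k : ℕ) (t : Finset (Fin k)) :
    (univ.filter fun σ : Equiv.Perm (Fin k) => ∀ i ∈ t, σ i = i).card
      = Nat.factorial (k - t.card) := by
  classical
  rw [← Fintype.card_subtype]
  have e1 : {σ : Equiv.Perm (Fin k) // ∀ i ∈ t, σ i = i} ≃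
      {σ : Equiv.Perm (Fin k) // ∀ i, ¬ (i ∉ t) → σ i = i} :=
    Equiv.subtypeEquivRight (fun σ => by simp)
  rw [Fintype.card_congr
    (e1.trans (Equiv.Perm.subtypeEquivSubtypePerm (fun i : Fin k => i ∉ t)).symm)]
  rw [Fintype.card_perm]
  congr 1
  rw [Fintype.card_subtype]
  have h : (univ.filter fun i : Fin k => i ∉ t) = tᶜ := by ext i; simp
  rw [h, Finset.card_compl]
  simp

theorem card_eps_fix (k : ℕ) (t : Finset (Fin k)) :
    (univ.filter fun ε : Fin k → Bool => ∀ i ∈ t, ε i = false).card = 2 ^ (k - t.card) := by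
  classical
  have h : (univ.filter fun ε : Fin k → Bool => ∀ i ∈ t, ε i = false)
      = Fintype.piFinset (fun i => if i ∈ t then ({false} : Finset Bool) else univ) := by
    ext ε
    simp only [Finset.mem_filter, Finset.mem_univ, true_and, Fintype.mem_piFinset]
    refine forall_congr' fun i => ?_
    split_ifs with hi <;> simp [hi]
  rw [h, Fintype.card_piFinset]
  have h2 : ∀ i : Fin k, (if i ∈ t then ({false} : Finset Bool) else univ).card
      = if i ∈ t then 1 else 2 := by
    intro i; split_ifs <;> simp
  rw [Finset.prod_congr rfl fun i _ => h2 i, Finset.prod_ite, Finset.prod_const,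
    Finset.prod_const, one_pow, one_mul]
  congr 1
  have : (univ.filter fun i : Fin k => ¬ i ∈ t) = tᶜ := by
    ext i; simp
  rw [this, Finset.card_compl]
  simp

theorem D_eq_E (k : ℕ) : (D k : ℤ) = E k := by
  classical
  have h1 : (D k : ℤ) = ∑ p : P k, (if Good k p then (1:ℤ) else 0) := by
    rw [Finset.sum_boole]; rfl
  have h2 : ∀ p : P k, (if Good k p then (1:ℤ) else 0)
      = ∏ i, ((if p.1 i = i ∧ p.2 i = false then (-1:ℤ) else 0) + 1) := by
    intro p
    by_cases hp : Good k p
    · rw [if_pos hp]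
      symm
      apply Finset.prod_eq_one
      intro i _
      rw [if_neg (hp i), zero_add]
    · rw [if_neg hp]
      symm
      obtain ⟨i, hi⟩ := not_forall.1 hp
      rw [not_not] at hi
      exact Finset.prod_eq_zero (Finset.mem_univ i) (by rw [if_pos hi, neg_add_cancel])
  have h3 : ∀ p : P k, (∏ i, ((if p.1 i = i ∧ p.2 i = false then (-1:ℤ) else 0) + 1))
      = ∑ t ∈ (univ : Finset (Fin k)).powerset, (-1:ℤ)^t.card *
          (if (∀ i ∈ t, p.1 i = i ∧ p.2 i = false) then 1 else 0) := by
    intro p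
    rw [Finset.prod_add]
    refine Finset.sum_congr rfl fun t _ => ?_
    rw [Finset.prod_const_one, mul_one]
    by_cases hall : ∀ i ∈ t, p.1 i = i ∧ p.2 i = false
    · rw [if_pos hall, mul_one,
        Finset.prod_congr rfl (fun i hi => if_pos (hall i hi)), Finset.prod_const]
    · rw [if_neg hall, mul_zero]
      push_neg at hall
      obtain ⟨i, hi, hbad⟩ := hall
      exact Finset.prod_eq_zero hi (if_neg fun hc => hbad hc.1 hc.2)
  have h4 : ∀ t : Finset (Fin k),
      (∑ p : P k, (if (∀ i ∈ t, p.1 i = i ∧ p.2 i = false) then (1:ℤ) else 0))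
      = ((Nat.factorial (k - t.card) * 2 ^ (k - t.card) : ℕ) : ℤ) := by
    intro t
    rw [Finset.sum_boole]
    norm_cast
    have hsplit : (univ.filter fun p : P k => ∀ i ∈ t, p.1 i = i ∧ p.2 i = false)
        = (univ.filter fun σ : Equiv.Perm (Fin k) => ∀ i ∈ t, σ i = i) ×ˢ
          (univ.filter fun ε : Fin k → Bool => ∀ i ∈ t, ε i = false) := by
      ext p
      simp only [Finset.mem_filter, Finset.mem_univ, true_and, Finset.mem_product]
      constructor
      · intro h; exact ⟨fun i hi => (h i hi).1, fun i hi => (h i hi).2⟩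
      · intro h i hi; exact ⟨h.1 i hi, h.2 i hi⟩
    rw [hsplit, Finset.card_product, card_sigma_fix, card_eps_fix]
  calc (D k : ℤ)
      = ∑ p : P k, ∑ t ∈ (univ : Finset (Fin k)).powerset, (-1:ℤ)^t.card *
          (if (∀ i ∈ t, p.1 i = i ∧ p.2 i = false) then 1 else 0) := by
        rw [h1]; exact Finset.sum_congr rfl fun p _ => (h2 p).trans (h3 p)
    _ = ∑ t ∈ (univ : Finset (Fin k)).powerset, (-1:ℤ)^t.card *
          ((Nat.factorial (k - t.card) * 2 ^ (k - t.card) : ℕ) : ℤ) := by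
        rw [Finset.sum_comm]
        exact Finset.sum_congr rfl fun t _ => by rw [← Finset.mul_sum, h4]
    _ = ∑ j ∈ Finset.range (k+1), ∑ t ∈ Finset.powersetCard j (univ : Finset (Fin k)),
          (-1:ℤ)^t.card * ((Nat.factorial (k - t.card) * 2 ^ (k - t.card) : ℕ) : ℤ) := by
        rw [Finset.sum_powerset]
        simp [Finset.card_univ]
    _ = E k := by
        unfold E
        refine Finset.sum_congr rfl fun j hj => ?_
        rw [Finset.sum_congr rfl (fun t ht => by
          rw [(Finset.mem_powersetCard.1 ht).2]), Finset.sum_const,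
          Finset.card_powersetCard, Finset.card_univ, Fintype.card_fin]
        push_cast
        ring

theorem fact_step (k j : ℕ) (hj : j ≤ k) :
    (k+1).choose j * Nat.factorial (k+1-j) = (k+1) * (k.choose j * Nat.factorial (k-j)) := by
  have h1 := Nat.choose_mul_factorial_mul_factorial (Nat.le_succ_of_le hj)
  have h2 := Nat.choose_mul_factorial_mul_factorial hj
  have hcancel : Nat.factorial j * ((k+1).choose j * Nat.factorial (k+1-j))
      = Nat.factorial j * ((k+1) * (k.choose j * Nat.factorial (k-j))) := by
    calc Nat.factorial j * ((k+1).choose j * Nat.factorial (k+1-j))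
        = (k+1).choose j * Nat.factorial j * Nat.factorial (k+1-j) := by ring
      _ = Nat.factorial (k+1) := h1
      _ = (k+1) * Nat.factorial k := rfl
      _ = (k+1) * (k.choose j * Nat.factorial j * Nat.factorial (k-j)) := by rw [h2]
      _ = Nat.factorial j * ((k+1) * (k.choose j * Nat.factorial (k-j))) := by ring
  exact Nat.eq_of_mul_eq_mul_left (Nat.factorial_pos j) hcancel

theorem E_succ (k : ℕ) : E (k+1) = 2 * (k+1) * E k + (-1) ^ (k+1) := by
  unfold E
  rw [Finset.sum_range_succ]
  have hlast : (-1:ℤ)^(k+1) * ((k+1).choose (k+1)) * (Nat.factorial (k+1-(k+1))) * 2^(k+1-(k+1))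
      = (-1)^(k+1) := by simp
  rw [hlast]
  congr 1
  rw [Finset.mul_sum]
  refine Finset.sum_congr rfl fun j hj => ?_
  have hj' : j ≤ k := Nat.lt_succ_iff.1 (Finset.mem_range.1 hj)
  have hstep := fact_step k j hj'
  have hpow : (2:ℤ)^(k+1-j) = 2 * 2^(k-j) := by
    rw [show k+1-j = (k-j)+1 by omega, pow_succ]; ring
  have hcast : ((k+1).choose j : ℤ) * (Nat.factorial (k+1-j)) =
      ((k+1) : ℤ) * ((k.choose j) * (Nat.factorial (k-j))) := by exact_mod_cast congrArg Nat.cast hstep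
  calc (-1:ℤ)^j * ((k+1).choose j) * (Nat.factorial (k+1-j)) * 2^(k+1-j)
      = (-1:ℤ)^j * (((k+1).choose j : ℤ) * (Nat.factorial (k+1-j))) * 2^(k+1-j) := by ring
    _ = (-1:ℤ)^j * (((k+1) : ℤ) * ((k.choose j) * (Nat.factorial (k-j)))) * (2 * 2^(k-j)) := by
        rw [hcast, hpow]
    _ = 2 * (↑k+1) * ((-1:ℤ)^j * (k.choose j) * (Nat.factorial (k-j)) * 2^(k-j)) := by ring

theorem D_succ : (D (n+1) : ℤ) = 2 * (n+1) * (D n : ℤ) + (-1) ^ (n+1) := by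
  rw [D_eq_E, D_eq_E, E_succ]

end Aux13

theorem stmt13 :
    dAB 1 = 0 ∧ dAB 2 = 3 ∧
    ∀ n : ℕ, 3 ≤ n →
      (dAB n : ℤ) = ((n : ℤ) - 1) *
        (2 * (dAB (n - 1) : ℤ) + 4 * (dAB (n - 2) : ℤ) + (-1 : ℤ) ^ (n - 1)) := by
  have hD0 := Aux13.D_zero
  have hDs := Aux13.D_succ
  have h2 := Aux13.two_mul_dAB
  have hd1 : (dAB 1 : ℤ) = 0 := by
    have := h2 1; have := hDs 0; push_cast at *; omega
  have hd2 : (dAB 2 : ℤ) = 3 := by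
    have := h2 2; have := hDs 1; have := hDs 0; push_cast at *; omega
  refine ⟨by exact_mod_cast hd1, by exact_mod_cast hd2, ?_⟩
  intro n hn
  obtain ⟨m, rfl⟩ : ∃ m, n = m + 3 := ⟨n - 3, by omega⟩
  simp only [show m + 3 - 1 = m + 2 from rfl, show m + 3 - 2 = m + 1 from rfl]
  have e1 := h2 (m+3); have e2 := h2 (m+2); have e3 := h2 (m+1)
  have r1 := hDs (m+2); have r2 := hDs (m+1)
  have key : 2 * (dAB (m+3) : ℤ) = 2 * ((((m+3 : ℕ) : ℤ) - 1) *
      (2 * (dAB (m+2) : ℤ) + 4 * (dAB (m+1) : ℤ) + (-1 : ℤ) ^ (m + 2))) := by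
    push_cast at e1 e2 e3 r1 r2 ⊢
    have hsgn : (-1 : ℤ) ^ (m+3) = -(-1 : ℤ)^(m+2) := by ring
    have hsgn2 : (-1 : ℤ) ^ (m+1) = (-1 : ℤ)^(m+3) := by ring
    nlinarith [e1, e2, e3, r1, r2]
  exact mul_left_cancel₀ two_ne_zero key
end

section
/- Let d^{AD}_n be the number of signed derangements σ in the even-signed permutation group D_n (signed permutations with an even number of negative entries and σ_i ≠ i for all i) whose type-D length ℓ_D(σ) is even. Then for all n ≥ 2, d^{AD}_n = n!·Σ_{k=0}^{n-2} 2^{n-k-2}(-1)^k/k! + (-1)^{n-1}(n-1). -/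
open Finset

/-- The number of negative entries of `w`. -/
def negCount (n : ℕ) (w : Fin n → ℤ) : ℕ :=
  (Finset.univ.filter fun i : Fin n => w i < 0).card

/-- The type-`D` length: `ℓ_D(w) = inv(w) - ∑_{i : w_i < 0} (w_i + 1)`. -/
def lenD (n : ℕ) (w : Fin n → ℤ) : ℤ :=
  (invW n w : ℤ) - ∑ i ∈ Finset.univ.filter (fun i : Fin n => w i < 0), (w i + 1)

/-- The number of signed derangements in the even-signed permutation group `D_n`
(signed permutations with an even number of negative entries) whose type-`D` length
is even. -/
noncomputable def dAD (n : ℕ) : ℕ :=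
  Set.ncard {w : Fin n → ℤ |
    isSignedPerm n w ∧ Even (negCount n w) ∧ isDerang n w ∧ Even (lenD n w)}


section Aux
open Equiv Equiv.Perm

-- number of inversions of a permutation of Fin n
def invP {n : ℕ} (π : Equiv.Perm (Fin n)) : ℕ :=
  ((Finset.univ : Finset (Fin n × Fin n)).filter fun p => p.1 < p.2 ∧ π p.2 < π p.1).card

lemma signAux_eq_sign {n : ℕ} (f : Equiv.Perm (Fin n)) : signAux f = Equiv.Perm.sign f := by
  refine Equiv.Perm.swap_induction_on f (by simp) ?_
  intro f x y hxy ih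
  rw [signAux_mul, Equiv.Perm.sign_mul, ih, signAux_swap hxy, Equiv.Perm.sign_swap hxy]

lemma sign_eq_pow_invP {n : ℕ} (π : Equiv.Perm (Fin n)) :
    Equiv.Perm.sign π = (-1 : ℤˣ) ^ invP π := by
  rw [← signAux_eq_sign]
  unfold signAux
  rw [Finset.prod_ite, Finset.prod_const, Finset.prod_const_one, mul_one]
  congr 1
  unfold invP
  apply Finset.card_bij' (fun x _ => ((x.2, x.1) : Fin n × Fin n))
    (fun p _ => (⟨p.2, p.1⟩ : Σ _ : Fin n, Fin n))
  · rintro ⟨a, b⟩ hx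
    simp only [Finset.mem_filter, mem_finPairsLT] at hx ⊢
    obtain ⟨h1, h2⟩ := hx
    refine ⟨Finset.mem_univ _, h1, lt_of_le_of_ne h2 ?_⟩
    exact fun h => (ne_of_lt h1) (π.injective h).symm
  · rintro ⟨a, b⟩ hp
    simp only [Finset.mem_filter, mem_finPairsLT, Finset.mem_univ, true_and] at hp ⊢
    exact ⟨hp.1, le_of_lt hp.2⟩
  · rintro ⟨a, b⟩ _; rfl
  · rintro ⟨a, b⟩ _; rfl

lemma card_filter_lt {n : ℕ} (π : Equiv.Perm (Fin n)) (c : Fin n) :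
    (Finset.univ.filter fun j => π j < c).card = (c : ℕ) := by
  rw [← Fin.card_Iio c]
  apply Finset.card_bij' (fun j _ => π j) (fun v _ => π.symm v)
  · intro a ha; simp only [Finset.mem_filter] at ha; simpa using ha.2
  · intro a ha; simp only [Finset.mem_Iio] at ha; simp [ha]
  · intro a _; simp
  · intro a _; simp

-- the encoding map
def Phi (n : ℕ) (q : Equiv.Perm (Fin n) × (Fin n → Bool)) : Fin n → ℤ :=
  fun i => if q.2 i then -(((q.1 i : ℕ) : ℤ) + 1) else ((q.1 i : ℕ) : ℤ) + 1

lemma Phi_natAbs (n : ℕ) (q) (i : Fin n) : ((Phi n q i).natAbs : ℤ) = (q.1 i : ℕ) + 1 := by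
  have h0 : (0:ℤ) ≤ ((q.1 i : ℕ) : ℤ) + 1 := by positivity
  unfold Phi; split
  · rw [Int.natAbs_neg, Int.natAbs_of_nonneg h0]
  · rw [Int.natAbs_of_nonneg h0]

lemma Phi_neg_iff (n : ℕ) (q) (i : Fin n) : Phi n q i < 0 ↔ q.2 i = true := by
  unfold Phi; split <;> simp_all <;> omega

lemma Phi_isSignedPerm (n : ℕ) (q) : isSignedPerm n (Phi n q) := by
  constructor
  · intro i
    have h := Phi_natAbs n q i
    have := (q.1 i).isLt
    omega
  · intro i j hij
    have h1 := Phi_natAbs n q i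
    have h2 := Phi_natAbs n q j
    simp only at hij
    rw [hij] at h1
    have : (q.1 i : ℕ) = (q.1 j : ℕ) := by omega
    exact q.1.injective (Fin.ext this)

lemma Phi_injective (n : ℕ) : Function.Injective (Phi n) := by
  intro q q' h
  have habs : ∀ i, q.1 i = q'.1 i := by
    intro i
    have h1 := Phi_natAbs n q i
    have h2 := Phi_natAbs n q' i
    rw [congrFun h i] at h1
    exact Fin.ext (by omega)
  have hsg : ∀ i, q.2 i = q'.2 i := by
    intro i
    have := Phi_neg_iff n q i
    have h2 := Phi_neg_iff n q' i
    rw [congrFun h i] at this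
    have h3 := this.symm.trans h2
    cases hq : q'.2 i <;> cases hp : q.2 i <;> simp_all
  exact Prod.ext (Equiv.ext habs) (funext hsg)

lemma Phi_surj (n : ℕ) (w : Fin n → ℤ) (hw : isSignedPerm n w) :
    ∃ q, Phi n q = w := by
  obtain ⟨hb, hinj⟩ := hw
  have hf : ∀ i, (w i).natAbs - 1 < n := fun i => by have := hb i; omega
  set f : Fin n → Fin n := fun i => ⟨(w i).natAbs - 1, hf i⟩ with hfdef
  have hfi : Function.Injective f := by
    intro i j hij
    apply hinj
    have := hb i; have := hb j
    simpa [hfdef, Fin.ext_iff] using by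
      have : (w i).natAbs - 1 = (w j).natAbs - 1 := congrArg Fin.val hij
      omega
  let π : Equiv.Perm (Fin n) := Equiv.ofBijective f (Finite.injective_iff_bijective.mp hfi)
  refine ⟨⟨π, fun i => decide (w i < 0)⟩, funext fun i => ?_⟩
  have hπ : (π i : ℕ) = (w i).natAbs - 1 := rfl
  have hb' := hb i
  unfold Phi
  simp only [hπ]
  by_cases hneg : w i < 0
  · rw [if_pos (by simpa using hneg)]
    have : ((w i).natAbs : ℤ) = -w i := Int.ofNat_natAbs_of_nonpos (le_of_lt hneg)
    push_cast
    omega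
  · rw [if_neg (by simpa using hneg)]
    have : ((w i).natAbs : ℤ) = w i := Int.natAbs_of_nonneg (not_lt.mp hneg) ▸ rfl
    push_cast
    omega

private def chi {n : ℕ} (q : Equiv.Perm (Fin n) × (Fin n → Bool)) (i j : Fin n) : ZMod 2 :=
  (if q.2 i = true then 1 else 0) * (if q.1 j < q.1 i then 1 else 0)

lemma core_parity {n : ℕ} (q : Equiv.Perm (Fin n) × (Fin n → Bool)) :
    ((invW n (Phi n q) : ZMod 2) + (invP q.1 : ZMod 2)) =
      ∑ i ∈ Finset.univ.filter (fun i => q.2 i = true), ((q.1 i : ℕ) : ZMod 2) := by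
  classical
  set U : Finset (Fin n × Fin n) := Finset.univ.filter (fun p => p.1 < p.2) with hU
  have hinvW : (invW n (Phi n q) : ZMod 2) =
      ∑ p ∈ U, (if Phi n q p.2 < Phi n q p.1 then (1 : ZMod 2) else 0) := by
    unfold invW
    rw [← Finset.filter_filter]
    exact (Finset.sum_boole _ _).symm
  have hinvP : (invP q.1 : ZMod 2) =
      ∑ p ∈ U, (if q.1 p.2 < q.1 p.1 then (1 : ZMod 2) else 0) := by
    unfold invP
    rw [← Finset.filter_filter]
    exact (Finset.sum_boole _ _).symm
  rw [hinvW, hinvP, ← Finset.sum_add_distrib]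
  have hpair : ∀ p ∈ U,
      ((if Phi n q p.2 < Phi n q p.1 then (1 : ZMod 2) else 0) +
          (if q.1 p.2 < q.1 p.1 then 1 else 0)) =
        chi q p.1 p.2 + chi q p.2 p.1 := by
    rintro ⟨i, j⟩ hp
    simp only [hU, Finset.mem_filter] at hp
    have hij : i < j := hp.2
    have hπne : q.1 i ≠ q.1 j := fun h => (ne_of_lt hij) (q.1.injective h)
    have hval : ∀ k : Fin n,
        Phi n q k = if q.2 k then -(((q.1 k : ℕ) : ℤ) + 1) else ((q.1 k : ℕ) : ℤ) + 1 :=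
      fun k => rfl
    have hfin : ∀ a b : Fin n, (q.1 a < q.1 b) ↔ ((q.1 a : ℕ) : ℤ) < ((q.1 b : ℕ) : ℤ) := by
      intro a b; rw [Fin.lt_iff_val_lt_val]; exact_mod_cast Iff.rfl
    rcases h1 : q.2 i <;> rcases h2 : q.2 j
    · -- both positive
      have key : (Phi n q j < Phi n q i) ↔ q.1 j < q.1 i := by
        rw [hval i, hval j, h1, h2, hfin j i]; simp
      by_cases hc : q.1 j < q.1 i <;>
        simp only [chi, if_congr key rfl rfl, h1, h2, hc, if_true, if_false, Bool.false_eq_true,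
          zero_mul, add_zero] <;> decide
    · -- i positive, j negative : always inversion in w
      have key : (Phi n q j < Phi n q i) := by
        rw [hval i, hval j, h1, h2]; simp only [if_true, if_false, Bool.false_eq_true]; omega
      by_cases hc : q.1 j < q.1 i
      · have hc' : ¬ q.1 i < q.1 j := asymm hc
        simp only [chi, if_pos key, h1, h2, hc, hc', if_true, if_false, Bool.false_eq_true,
          zero_mul, one_mul, mul_zero, add_zero, mul_ite, mul_one]
        decide
      · have hd : q.1 i < q.1 j := by
          rcases lt_trichotomy (q.1 i) (q.1 j) with h | h | h
          · exact h
          · exact absurd h hπne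
          · exact absurd h hc
        simp only [chi, if_pos key, h1, h2, hc, hd, if_true, if_false, Bool.false_eq_true,
          zero_mul, one_mul, mul_zero, add_zero, mul_ite, mul_one]
        decide
    · -- i negative, j positive : never inversion in w
      have key : ¬ (Phi n q j < Phi n q i) := by
        rw [hval i, hval j, h1, h2]; simp only [if_true, if_false, Bool.false_eq_true]; omega
      by_cases hc : q.1 j < q.1 i <;>
        simp only [chi, if_neg key, h1, h2, hc, if_true, if_false, Bool.false_eq_true,
          zero_mul, one_mul, mul_zero, zero_add, add_zero, mul_ite, mul_one] <;> simp [ite_self]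
    · -- both negative
      have key : (Phi n q j < Phi n q i) ↔ q.1 i < q.1 j := by
        rw [hval i, hval j, h1, h2, hfin i j]
        simp only [if_true]
        omega
      by_cases hc : q.1 j < q.1 i
      · have hc' : ¬ q.1 i < q.1 j := asymm hc
        simp only [chi, if_congr key rfl rfl, h1, h2, hc, hc', if_true, if_false,
          one_mul, mul_one, mul_zero, mul_ite]
        decide
      · have hd : q.1 i < q.1 j := by
          rcases lt_trichotomy (q.1 i) (q.1 j) with h | h | h
          · exact h
          · exact absurd h hπne
          · exact absurd h hc
        simp only [chi, if_congr key rfl rfl, h1, h2, hc, hd, if_true, if_false,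
          one_mul, mul_one, mul_zero, mul_ite]
        decide
  rw [Finset.sum_congr rfl hpair]
  rw [Finset.sum_add_distrib]
  have hswap : (∑ p ∈ U, chi q p.2 p.1) =
      ∑ p ∈ Finset.univ.filter (fun p : Fin n × Fin n => p.2 < p.1), chi q p.1 p.2 := by
    apply Finset.sum_nbij' (fun p => (p.2, p.1)) (fun p => (p.2, p.1)) <;>
      simp [hU]
  rw [hswap]
  have hunion : (∑ p ∈ U, chi q p.1 p.2) +
      (∑ p ∈ Finset.univ.filter (fun p : Fin n × Fin n => p.2 < p.1), chi q p.1 p.2) =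
      ∑ p ∈ Finset.univ.filter (fun p : Fin n × Fin n => p.1 ≠ p.2), chi q p.1 p.2 := by
    rw [← Finset.sum_union]
    · apply Finset.sum_congr _ (fun _ _ => rfl)
      rw [hU, ← Finset.filter_or]
      apply Finset.filter_congr
      intro p _
      constructor
      · rintro (h | h)
        · exact ne_of_lt h
        · exact (ne_of_lt h).symm
      · intro h
        rcases lt_or_gt_of_ne h with h' | h'
        · exact Or.inl h'
        · exact Or.inr h'
    · rw [hU, Finset.disjoint_filter]
      intro p _ h1 h2
      exact absurd h2 (asymm h1)
  rw [hunion]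
  have hdiag : (∑ p ∈ Finset.univ.filter (fun p : Fin n × Fin n => p.1 ≠ p.2), chi q p.1 p.2) =
      ∑ p : Fin n × Fin n, chi q p.1 p.2 := by
    apply Finset.sum_subset (Finset.filter_subset _ _)
    intro p _ hp
    have hpd : p.1 = p.2 := by
      by_contra h
      exact hp (Finset.mem_filter.mpr ⟨Finset.mem_univ _, h⟩)
    simp [chi, hpd]
  rw [hdiag, ← Finset.univ_product_univ, Finset.sum_product]
  have hinner : ∀ i : Fin n, (∑ j : Fin n, chi q i j) =
      (if q.2 i = true then ((q.1 i : ℕ) : ZMod 2) else 0) := by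
    intro i
    unfold chi
    rw [← Finset.mul_sum, Finset.sum_boole, card_filter_lt]
    split <;> simp
  rw [Finset.sum_congr rfl (fun i _ => hinner i)]
  exact (Finset.sum_filter _ _).symm

lemma even_lenD_iff {n : ℕ} (q : Equiv.Perm (Fin n) × (Fin n → Bool)) :
    Even (lenD n (Phi n q)) ↔ Equiv.Perm.sign q.1 = 1 := by
  classical
  have hfilter : (Finset.univ.filter fun i : Fin n => Phi n q i < 0) =
      Finset.univ.filter (fun i => q.2 i = true) :=
    Finset.filter_congr fun i _ => by rw [Phi_neg_iff]
  set S : ℕ := ∑ i ∈ Finset.univ.filter (fun i : Fin n => q.2 i = true), (q.1 i : ℕ) with hS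
  have hlen : lenD n (Phi n q) = ((invW n (Phi n q) + S : ℕ) : ℤ) := by
    unfold lenD
    rw [hfilter]
    have : ∀ i ∈ Finset.univ.filter (fun i : Fin n => q.2 i = true),
        Phi n q i + 1 = -((q.1 i : ℕ) : ℤ) := by
      intro i hi
      simp only [Finset.mem_filter] at hi
      unfold Phi
      rw [hi.2]
      simp
    rw [Finset.sum_congr rfl this, Finset.sum_neg_distrib, hS]
    push_cast
    ring
  rw [hlen, Int.even_coe_nat]
  rw [even_iff_two_dvd, ← ZMod.natCast_eq_zero_iff]
  have hcast : ((invW n (Phi n q) + S : ℕ) : ZMod 2) =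
      (invW n (Phi n q) : ZMod 2) + ∑ i ∈ Finset.univ.filter
        (fun i : Fin n => q.2 i = true), ((q.1 i : ℕ) : ZMod 2) := by
    push_cast [hS]
    rfl
  have hcore := core_parity q
  have hx : ∀ x : ZMod 2, x + x = 0 := by decide
  have key : ((invW n (Phi n q) + S : ℕ) : ZMod 2) = (invP q.1 : ZMod 2) := by
    rw [hcast, ← hcore]
    have h2 := hx (invW n (Phi n q) : ZMod 2)
    have : ((invW n (Phi n q) : ZMod 2)) + ((invW n (Phi n q) : ZMod 2) + (invP q.1 : ZMod 2))
        = ((invW n (Phi n q) : ZMod 2) + (invW n (Phi n q) : ZMod 2)) + (invP q.1 : ZMod 2) := by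
      ring
    rw [this, h2, zero_add]
  rw [key, ZMod.natCast_eq_zero_iff, ← even_iff_two_dvd]
  rw [sign_eq_pow_invP]
  exact (neg_one_pow_eq_one_iff_even (by decide)).symm
def TT (n : ℕ) : Finset (Equiv.Perm (Fin n) × (Fin n → Bool)) :=
  Finset.univ.filter fun q => Equiv.Perm.sign q.1 = 1 ∧
    Even (Finset.univ.filter fun i => q.2 i = true).card ∧
    ∀ i, q.1 i = i → q.2 i = true

lemma negCount_Phi (n : ℕ) (q) :
    negCount n (Phi n q) = (Finset.univ.filter fun i : Fin n => q.2 i = true).card := by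
  unfold negCount
  congr 1
  exact Finset.filter_congr fun i _ => by rw [Phi_neg_iff]

lemma isDerang_Phi (n : ℕ) (q) :
    isDerang n (Phi n q) ↔ ∀ i : Fin n, q.1 i = i → q.2 i = true := by
  unfold isDerang
  apply forall_congr'
  intro i
  unfold Phi
  rcases h : q.2 i with _ | _
  · simp only [h, Bool.false_eq_true, if_false]
    constructor
    · intro hne heq
      exfalso
      apply hne
      rw [heq]
    · intro himp heq
      have : q.1 i = i := by
        apply Fin.ext
        have : ((q.1 i : ℕ) : ℤ) = ((i : ℕ) : ℤ) := by omega
        exact_mod_cast this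
      exact absurd (himp this) (by simp [h])
  · simp only [h, if_true]
    constructor
    · intro _ _; trivial
    · intro _ hcon
      have h0 : (0:ℤ) ≤ ((i : ℕ) : ℤ) := by positivity
      omega

lemma dAD_eq_card (n : ℕ) : dAD n = (TT n).card := by
  classical
  have hset : {w : Fin n → ℤ |
      isSignedPerm n w ∧ Even (negCount n w) ∧ isDerang n w ∧ Even (lenD n w)} =
      Phi n '' (TT n : Set _) := by
    ext w
    constructor
    · rintro ⟨hsp, hneg, hder, hlen⟩
      obtain ⟨q, hq⟩ := Phi_surj n w hsp
      refine ⟨q, ?_, hq⟩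
      have h1 : Equiv.Perm.sign q.1 = 1 := by
        rw [← even_lenD_iff q, hq]; exact hlen
      have h2 : Even (Finset.univ.filter fun i : Fin n => q.2 i = true).card := by
        rw [← negCount_Phi n q, hq]; exact hneg
      have h3 : ∀ i : Fin n, q.1 i = i → q.2 i = true := by
        rw [← isDerang_Phi n q, hq]; exact hder
      simp only [TT, Finset.coe_filter, Set.mem_setOf_eq, Finset.mem_univ, true_and]
      exact ⟨h1, h2, h3⟩
    · rintro ⟨q, hqmem, rfl⟩
      simp only [TT, Finset.coe_filter, Set.mem_setOf_eq, Finset.mem_univ, true_and] at hqmem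
      obtain ⟨h1, h2, h3⟩ := hqmem
      refine ⟨Phi_isSignedPerm n q, ?_, ?_, ?_⟩
      · rw [negCount_Phi n q]; exact h2
      · rw [isDerang_Phi n q]; exact h3
      · rw [even_lenD_iff q]; exact h1
  unfold dAD
  rw [hset, Set.ncard_image_of_injective _ (Phi_injective n), Set.ncard_coe_finset]

-- count of even permutations of a finite type
lemma count_even_perms (β : Type*) [DecidableEq β] [Fintype β] :
    ((Finset.univ.filter fun f : Equiv.Perm β => Equiv.Perm.sign f = 1).card : ℚ) =
      if Fintype.card β ≤ 1 then 1 else (Nat.factorial (Fintype.card β) : ℚ) / 2 := by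
  classical
  by_cases h : Fintype.card β ≤ 1
  · rw [if_pos h]
    have hsub : Subsingleton β := Fintype.card_le_one_iff_subsingleton.mp h
    have hfil : (Finset.univ.filter fun f : Equiv.Perm β => Equiv.Perm.sign f = 1) =
        Finset.univ := by
      apply Finset.filter_true_of_mem
      intro f _
      have : f = 1 := Subsingleton.elim f 1
      rw [this, map_one]
    rw [hfil]
    have : Fintype.card (Equiv.Perm β) = Nat.factorial (Fintype.card β) := Fintype.card_perm
    have h1 : Nat.factorial (Fintype.card β) = 1 := by
      interval_cases h' : Fintype.card β <;> simp [Nat.factorial]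
    rw [Finset.card_univ, this, h1, Nat.cast_one]
  · rw [if_neg h]
    push_neg at h
    have : Nontrivial β := Fintype.one_lt_card_iff_nontrivial.mp h
    have hcard : (Finset.univ.filter fun f : Equiv.Perm β => Equiv.Perm.sign f = 1).card =
        Fintype.card (alternatingGroup β) := by
      rw [← Fintype.card_subtype]
      apply Fintype.card_congr
      apply Equiv.subtypeEquivRight
      intro f
      exact (Equiv.Perm.mem_alternatingGroup).symm
    have h2 := two_mul_card_alternatingGroup (α := β)
    rw [Fintype.card_perm] at h2
    rw [hcard]
    rw [eq_div_iff (by norm_num : (2:ℚ) ≠ 0)]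
    rw [mul_comm, ← Nat.cast_ofNat, ← Nat.cast_mul, h2]

-- count of even permutations fixing t pointwise
lemma count_c1 {n : ℕ} (t : Finset (Fin n)) :
    ((Finset.univ.filter fun π : Equiv.Perm (Fin n) =>
        Equiv.Perm.sign π = 1 ∧ ∀ i ∈ t, π i = i).card : ℚ) =
      if n - t.card ≤ 1 then 1 else (Nat.factorial (n - t.card) : ℚ) / 2 := by
  classical
  have hcard : Fintype.card {x : Fin n // x ∉ t} = n - t.card := by
    rw [Fintype.card_subtype]
    have : Finset.univ.filter (fun x : Fin n => x ∉ t) = tᶜ := by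
      ext x; simp
    rw [this, Finset.card_compl, Fintype.card_fin]
  rw [← hcard, ← count_even_perms {x : Fin n // x ∉ t}]
  congr 1
  refine Finset.card_bij'
    (fun π hπ => π.subtypePerm (p := fun x : Fin n => x ∉ t) (fun x => (not_congr (by
      have hfix : ∀ i ∈ t, π i = i := (Finset.mem_filter.mp hπ).2.2
      constructor
      · intro hx
        rw [hfix x hx]; exact hx
      · intro hπx
        have h2 : π x = x := π.injective (hfix _ hπx)
        rwa [h2] at hπx)).symm))
    (fun f _ => Equiv.Perm.ofSubtype f) ?_ ?_ ?_ ?_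
  · intro π hπ
    simp only [Finset.mem_filter, Finset.mem_univ, true_and] at hπ ⊢
    have hfix : ∀ i ∈ t, π i = i := hπ.2
    have h₂ : ∀ x, π x ≠ x → x ∉ t := fun x hx hxt => hx (hfix x hxt)
    have key : ∀ x : Fin n, x ∈ t ↔ π x ∈ t := fun x =>
      ⟨fun hx => by rw [hfix x hx]; exact hx,
       fun hπx => by
        have h2 : π x = x := π.injective (hfix _ hπx)
        rwa [h2] at hπx⟩
    have h₁ : ∀ x : Fin n, π x ∉ t ↔ x ∉ t := fun x => (not_congr (key x)).symm
    have : Equiv.Perm.sign (π.subtypePerm (p := fun x : Fin n => x ∉ t) h₁) = 1 := by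
      rw [← Equiv.Perm.sign_ofSubtype, Equiv.Perm.ofSubtype_subtypePerm h₁ h₂]
      exact hπ.1
    exact this
  · intro f hf
    simp only [Finset.mem_filter, Finset.mem_univ, true_and] at hf ⊢
    constructor
    · rw [Equiv.Perm.sign_ofSubtype]; exact hf
    · intro i hi
      exact Equiv.Perm.ofSubtype_apply_of_not_mem f (not_not_intro hi)
  · intro π hπ
    simp only [Finset.mem_filter, Finset.mem_univ, true_and] at hπ
    have hfix : ∀ i ∈ t, π i = i := hπ.2
    have h₂ : ∀ x, π x ≠ x → x ∉ t := fun x hx hxt => hx (hfix x hxt)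
    have key : ∀ x : Fin n, x ∈ t ↔ π x ∈ t := fun x =>
      ⟨fun hx => by rw [hfix x hx]; exact hx,
       fun hπx => by
        have h2 : π x = x := π.injective (hfix _ hπx)
        rwa [h2] at hπx⟩
    have h₁ : ∀ x : Fin n, π x ∉ t ↔ x ∉ t := fun x => (not_congr (key x)).symm
    exact Equiv.Perm.ofSubtype_subtypePerm h₁ h₂
  · intro f hf
    exact Equiv.Perm.subtypePerm_ofSubtype f

-- count of even-size subsets
lemma count_even_subsets {α : Type*} [DecidableEq α] (u : Finset α) :
    ((u.powerset.filter fun s => Even s.card).card : ℚ) =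
      if u.card = 0 then 1 else 2 ^ (u.card - 1) := by
  classical
  set E := u.powerset.filter fun s => Even s.card with hE
  set O := u.powerset.filter fun s => ¬ Even s.card with hO
  have hsum : (E.card : ℤ) + O.card = 2 ^ u.card := by
    rw [← Nat.cast_add]
    norm_cast
    rw [hE, hO, Finset.card_filter_add_card_filter_not, Finset.card_powerset]
  have hdiff : (E.card : ℤ) - O.card = if u = ∅ then 1 else 0 := by
    rw [← Finset.sum_powerset_neg_one_pow_card (x := u)]
    rw [← Finset.sum_filter_add_sum_filter_not u.powerset (fun s => Even s.card)]
    rw [← hE, ← hO]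
    have h1 : ∑ s ∈ E, (-1 : ℤ) ^ s.card = E.card := by
      rw [Finset.sum_congr rfl (fun s hs => (Finset.mem_filter.mp hs).2.neg_one_pow)]
      simp
    have h2 : ∑ s ∈ O, (-1 : ℤ) ^ s.card = -O.card := by
      rw [Finset.sum_congr rfl
        (fun s hs => (Nat.not_even_iff_odd.mp (Finset.mem_filter.mp hs).2).neg_one_pow),
        Finset.sum_const, nsmul_eq_mul, mul_neg_one]
    rw [h1, h2]
    ring
  by_cases h : u.card = 0
  · rw [if_pos h]
    rw [Finset.card_eq_zero] at h
    rw [if_pos h] at hdiff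
    rw [show u.card = 0 from by rw [h]; rfl, pow_zero] at hsum
    have : E.card = 1 := by omega
    rw [this, Nat.cast_one]
  · rw [if_neg h]
    rw [if_neg (fun hc => h (by rw [hc]; rfl))] at hdiff
    have h2E : 2 * (E.card : ℤ) = 2 ^ u.card := by omega
    have : ((E.card : ℚ)) = 2 ^ u.card / 2 := by
      rw [eq_div_iff (by norm_num : (2:ℚ) ≠ 0), mul_comm]
      exact_mod_cast h2E
    rw [this]
    obtain ⟨v, hv⟩ : ∃ v, u.card = v + 1 := ⟨u.card - 1, by omega⟩
    rw [hv]
    simp [pow_succ]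

lemma count_c2 {n : ℕ} (t : Finset (Fin n)) :
    ((Finset.univ.filter fun ε : Fin n → Bool =>
        Even (Finset.univ.filter fun i => ε i = true).card ∧ ∀ i ∈ t, ε i = false).card : ℚ) =
      if n - t.card = 0 then 1 else 2 ^ (n - t.card - 1) := by
  classical
  have hcompl : (tᶜ : Finset (Fin n)).card = n - t.card := by
    rw [Finset.card_compl, Fintype.card_fin]
  rw [← hcompl, ← count_even_subsets tᶜ]
  congr 1
  refine Finset.card_bij' (fun ε _ => Finset.univ.filter fun i => ε i = true)
    (fun s _ => fun i => decide (i ∈ s)) ?_ ?_ ?_ ?_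
  · intro ε hε
    simp only [Finset.mem_filter, Finset.mem_univ, true_and] at hε ⊢
    refine ⟨Finset.mem_powerset.mpr ?_, hε.1⟩
    intro i hi
    simp only [Finset.mem_filter, Finset.mem_univ, true_and] at hi
    simp only [Finset.mem_compl]
    intro hit
    rw [hε.2 i hit] at hi
    exact Bool.false_ne_true hi
  · intro s hs
    simp only [Finset.mem_filter, Finset.mem_powerset] at hs
    obtain ⟨hsub, heven⟩ := hs
    have hfil : (Finset.univ.filter fun i => decide (i ∈ s) = true) = s := by
      ext i
      simp
    simp only [Finset.mem_filter, Finset.mem_univ, true_and]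
    constructor
    · rw [hfil]; exact heven
    · intro i hit
      have : i ∉ s := fun hmem => (Finset.mem_compl.mp (hsub hmem)) hit
      simp [this]
  · intro ε _
    funext i
    by_cases h : ε i = true <;> simp [h]
  · intro s _
    ext i
    simp

lemma master_count (n : ℕ) : ((TT n).card : ℚ) =
    ∑ k ∈ Finset.range (n + 1), (n.choose k : ℚ) * ((-1) ^ k *
      ((if n - k ≤ 1 then 1 else ((n - k).factorial : ℚ) / 2) *
        (if n - k = 0 then 1 else 2 ^ (n - k - 1)))) := by
  classical
  set A := Finset.univ.filter (fun q : Equiv.Perm (Fin n) × (Fin n → Bool) =>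
    Equiv.Perm.sign q.1 = 1 ∧ Even (Finset.univ.filter fun i => q.2 i = true).card) with hA
  have hTT : TT n = A.filter (fun q => ∀ i : Fin n, q.1 i = i → q.2 i = true) := by
    rw [TT, hA, Finset.filter_filter]
    apply Finset.filter_congr
    intro q _
    tauto
  have step2 : ((TT n).card : ℚ) =
      ∑ q ∈ A, if (∀ i : Fin n, q.1 i = i → q.2 i = true) then (1:ℚ) else 0 := by
    rw [hTT, Finset.sum_boole]
  rw [step2]
  have step3 : ∀ q ∈ A, (if (∀ i : Fin n, q.1 i = i → q.2 i = true) then (1:ℚ) else 0) =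
      ∏ i : Fin n, ((if q.1 i = i ∧ q.2 i = false then (-1:ℚ) else 0) + 1) := by
    intro q _
    have h1 : ∀ i : Fin n, ((if q.1 i = i ∧ q.2 i = false then (-1:ℚ) else 0) + 1) =
        if ¬(q.1 i = i ∧ q.2 i = false) then (1:ℚ) else 0 := by
      intro i
      by_cases h : (q.1 i = i ∧ q.2 i = false) <;> simp [h]
    rw [Finset.prod_congr rfl (fun i _ => h1 i), Finset.prod_boole]
    by_cases hq : ∀ i : Fin n, q.1 i = i → q.2 i = true
    · rw [if_pos hq, if_pos]
      intro i _
      rintro ⟨ha, hb⟩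
      simp [hq i ha] at hb
    · rw [if_neg hq, if_neg]
      intro hall
      apply hq
      intro i hi
      by_contra hfalse
      exact hall i (Finset.mem_univ i) ⟨hi, by simpa using hfalse⟩
  rw [Finset.sum_congr rfl step3]
  have step4 : ∀ q ∈ A, (∏ i : Fin n, ((if q.1 i = i ∧ q.2 i = false then (-1:ℚ) else 0) + 1)) =
      ∑ t ∈ (Finset.univ : Finset (Fin n)).powerset,
        (-1:ℚ) ^ t.card * (if (∀ i ∈ t, q.1 i = i ∧ q.2 i = false) then (1:ℚ) else 0) := by
    intro q _
    rw [Finset.prod_add]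
    apply Finset.sum_congr rfl
    intro t _
    rw [Finset.prod_const_one, mul_one]
    have : ∀ i : Fin n, (if q.1 i = i ∧ q.2 i = false then (-1:ℚ) else 0) =
        (-1:ℚ) * (if q.1 i = i ∧ q.2 i = false then (1:ℚ) else 0) := by
      intro i; by_cases h : (q.1 i = i ∧ q.2 i = false) <;> simp [h]
    rw [Finset.prod_congr rfl (fun i _ => this i), Finset.prod_mul_distrib,
      Finset.prod_const, Finset.prod_boole]
    by_cases hP : ∀ i ∈ t, q.1 i = i ∧ q.2 i = false <;> simp [hP]
  rw [Finset.sum_congr rfl step4, Finset.sum_comm]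
  have step5 : ∀ t : Finset (Fin n),
      (∑ q ∈ A, (-1:ℚ) ^ t.card * (if (∀ i ∈ t, q.1 i = i ∧ q.2 i = false) then (1:ℚ) else 0)) =
      (-1:ℚ) ^ t.card *
        ((if n - t.card ≤ 1 then (1:ℚ) else ((n - t.card).factorial : ℚ) / 2) *
          (if n - t.card = 0 then 1 else 2 ^ (n - t.card - 1))) := by
    intro t
    rw [← Finset.mul_sum]
    congr 1
    rw [Finset.sum_boole]
    have hsplit : (A.filter (fun q => ∀ i ∈ t, q.1 i = i ∧ q.2 i = false)) =
        Finset.univ.filter (fun q : Equiv.Perm (Fin n) × (Fin n → Bool) =>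
          (Equiv.Perm.sign q.1 = 1 ∧ ∀ i ∈ t, q.1 i = i) ∧
          (Even (Finset.univ.filter fun i => q.2 i = true).card ∧ ∀ i ∈ t, q.2 i = false)) := by
      rw [hA, Finset.filter_filter]
      apply Finset.filter_congr
      intro q _
      constructor
      · rintro ⟨⟨h1, h2⟩, h3⟩
        exact ⟨⟨h1, fun i hi => (h3 i hi).1⟩, ⟨h2, fun i hi => (h3 i hi).2⟩⟩
      · rintro ⟨⟨h1, h4⟩, ⟨h2, h5⟩⟩
        exact ⟨⟨h1, h2⟩, fun i hi => ⟨h4 i hi, h5 i hi⟩⟩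
    have hprodcard : (Finset.univ.filter (fun q : Equiv.Perm (Fin n) × (Fin n → Bool) =>
          (Equiv.Perm.sign q.1 = 1 ∧ ∀ i ∈ t, q.1 i = i) ∧
          (Even (Finset.univ.filter fun i => q.2 i = true).card ∧ ∀ i ∈ t, q.2 i = false))).card =
        (Finset.univ.filter (fun π : Equiv.Perm (Fin n) =>
          Equiv.Perm.sign π = 1 ∧ ∀ i ∈ t, π i = i)).card *
        (Finset.univ.filter (fun ε : Fin n → Bool =>
          Even (Finset.univ.filter fun i => ε i = true).card ∧ ∀ i ∈ t, ε i = false)).card := by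
      rw [← Finset.card_product]
      congr 1
      ext q
      simp only [Finset.mem_filter, Finset.mem_univ, true_and, Finset.mem_product]
    rw [hsplit, hprodcard]
    push_cast
    rw [count_c1 t, count_c2 t]
  rw [Finset.sum_congr rfl (fun t _ => step5 t)]
  have := Finset.sum_powerset_apply_card
    (fun m => (-1:ℚ) ^ m *
      ((if n - m ≤ 1 then (1:ℚ) else ((n - m).factorial : ℚ) / 2) *
        (if n - m = 0 then 1 else 2 ^ (n - m - 1))))
    (x := (Finset.univ : Finset (Fin n)))
  rw [this, Finset.card_univ, Fintype.card_fin]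
  apply Finset.sum_congr rfl
  intro k _
  rw [nsmul_eq_mul]

end Aux

open Equiv Equiv.Perm

theorem stmt14 (n : ℕ) (hn : 2 ≤ n) :
    (dAD n : ℚ) = (n.factorial : ℚ) *
        (∑ k ∈ Finset.range (n - 1), (2 : ℚ) ^ (n - k - 2) * (-1 : ℚ) ^ k / (k.factorial : ℚ))
      + (-1 : ℚ) ^ (n - 1) * ((n : ℚ) - 1) := by
  obtain ⟨m, rfl⟩ : ∃ m, n = m + 2 := ⟨n - 2, by omega⟩
  rw [dAD_eq_card, master_count]
  have hsplit : ∀ g : ℕ → ℚ, ∑ k ∈ Finset.range (m + 2 + 1), g k =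
      (∑ k ∈ Finset.range (m + 1), g k) + g (m + 1) + g (m + 2) := by
    intro g
    rw [show m + 2 + 1 = (m + 1) + 1 + 1 by omega, Finset.sum_range_succ, Finset.sum_range_succ]
  rw [hsplit]
  have hm1 : m + 2 - 1 = m + 1 := by omega
  rw [hm1]
  have hsum : (∑ k ∈ Finset.range (m + 1), ((m + 2).choose k : ℚ) * ((-1) ^ k *
      ((if m + 2 - k ≤ 1 then 1 else ((m + 2 - k).factorial : ℚ) / 2) *
        (if m + 2 - k = 0 then 1 else 2 ^ (m + 2 - k - 1))))) =
      ((m + 2).factorial : ℚ) *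
        (∑ k ∈ Finset.range (m + 1), (2 : ℚ) ^ (m + 2 - k - 2) * (-1 : ℚ) ^ k / (k.factorial : ℚ)) := by
    rw [Finset.mul_sum]
    apply Finset.sum_congr rfl
    intro k hk
    rw [Finset.mem_range] at hk
    have hk' : k ≤ m := by omega
    have h2 : ¬ (m + 2 - k ≤ 1) := by omega
    have h0 : ¬ (m + 2 - k = 0) := by omega
    rw [if_neg h2, if_neg h0]
    have hpow : (2:ℚ) ^ (m + 2 - k - 1) = 2 * 2 ^ (m + 2 - k - 2) := by
      rw [show m + 2 - k - 1 = (m + 2 - k - 2) + 1 by omega, pow_succ]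
      ring
    have hfact : ((m + 2).choose k : ℚ) * (((m + 2 - k).factorial : ℚ)) * (k.factorial : ℚ) =
        ((m + 2).factorial : ℚ) := by
      norm_cast
      rw [mul_right_comm]
      exact Nat.choose_mul_factorial_mul_factorial (by omega)
    have hkne : (k.factorial : ℚ) ≠ 0 := by positivity
    have hE : m + 2 - k - 2 = m - k := by omega
    rw [hpow, hE]
    have hC : ((m + 2).choose k : ℚ) * ((m + 2 - k).factorial : ℚ) =
        ((m + 2).factorial : ℚ) / (k.factorial : ℚ) := by
      rw [eq_div_iff hkne]; exact hfact
    calc ((m + 2).choose k : ℚ) * ((-1) ^ k *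
        (((m + 2 - k).factorial : ℚ) / 2 * (2 * 2 ^ (m - k))))
        = (((m + 2).choose k : ℚ) * ((m + 2 - k).factorial : ℚ)) * ((-1) ^ k * 2 ^ (m - k)) := by
          ring
      _ = (((m + 2).factorial : ℚ) / (k.factorial : ℚ)) * ((-1) ^ k * 2 ^ (m - k)) := by rw [hC]
      _ = ((m + 2).factorial : ℚ) * ((2 : ℚ) ^ (m - k) * (-1 : ℚ) ^ k / (k.factorial : ℚ)) := by
          ring
  rw [hsum]
  have e1 : m + 2 - (m + 1) = 1 := by omega
  have e2 : m + 2 - (m + 2) = 0 := by omega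
  rw [e1, e2]
  norm_num
  have hp : (-1:ℚ) ^ (m + 2) = (-1) ^ (m + 1) * (-1) := pow_succ _ _
  rw [hp]
  push_cast
  ring
end
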